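/- arXiv:2510.18365 — 3 statements merged into one kernel-verified Lean document; each statement's English description precedes it below -/
import Mathlib

section
/- There is a universal constant C > 0 such that: for every k ∈ ℝ with 0 < |k| ≤ 1, every t ≥ 0, and all functions ψ, w : [−1,1] → ℂ with ψ three times continuously differentiable, w twice continuously differentiable, ψ(±1) = 0, w(±1) = 0, and ψ''(y) − k² ψ(y) = −w(y) on (−1,1), the function ψ₁ := ψ' + i k t ψ satisfies ( ‖ψ₁'‖²_{L²} + ‖ψ₁‖²_{L²} )^{1/2} ≤ C (1 + |k| t)^{−1} ( ‖(e_{k,t} w)''‖²_{L²} + ‖(e_{k,t} w)'‖²_{L²} + ‖w‖²_{L²} )^{1/2}, where e_{k,t}(y) = e^{i k y t} and derivatives of e_{k,t} w are taken in y. -/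
open Set

/-- The squared `L²` norm of a function on the interval `(-1, 1)`. -/
noncomputable def L2sq (h : ℝ → ℂ) : ℝ :=
  ∫ y in (-1 : ℝ)..1, ‖h y‖ ^ 2

/-- The function `y ↦ e^{ikyt} w(y)`. -/
noncomputable def ew (k t : ℝ) (w : ℝ → ℂ) : ℝ → ℂ :=
  fun y => Complex.exp (Complex.I * (k : ℂ) * (y : ℂ) * (t : ℂ)) * w y

namespace Psi1Aux

open MeasureTheory intervalIntegral Complex

noncomputable def nn (h : ℝ → ℂ) : ℝ := Real.sqrt (L2sq h)

lemma L2sq_nonneg (h : ℝ → ℂ) : 0 ≤ L2sq h := by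
  apply intervalIntegral.integral_nonneg (by norm_num : (-1:ℝ) ≤ 1)
  intro y _
  positivity

lemma nn_nonneg (h : ℝ → ℂ) : 0 ≤ nn h := Real.sqrt_nonneg _

lemma nn_sq (h : ℝ → ℂ) : nn h ^ 2 = L2sq h := Real.sq_sqrt (L2sq_nonneg h)

lemma nn_le_of_L2sq_le {h : ℝ → ℂ} {c : ℝ} (hc : 0 ≤ c) (hle : L2sq h ≤ c^2) : nn h ≤ c := by
  have h := Real.sqrt_le_sqrt hle
  rwa [Real.sqrt_sq hc] at h

lemma norm_ofRealC (r : ℝ) : ‖(r:ℂ)‖ = |r| := by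
  rw [Complex.norm_real, Real.norm_eq_abs]

lemma key_cs (f g : ℝ → ℂ) (hf : Continuous f) (hg : Continuous g) :
    (∫ y in (-1:ℝ)..1, ‖f y‖ * ‖g y‖) ≤ nn f * nn g := by
  have hA : 0 ≤ L2sq f := L2sq_nonneg f
  have hB : 0 ≤ L2sq g := L2sq_nonneg g
  set A := L2sq f with hAdef
  set B := L2sq g with hBdef
  have hbase : ∀ ε : ℝ, 0 < ε → (∫ y in (-1:ℝ)..1, ‖f y‖ * ‖g y‖) ≤ (ε * A + B / ε)/2 := by
    intro ε hε
    have hpt : ∀ y ∈ Icc (-1:ℝ) 1, ‖f y‖ * ‖g y‖ ≤ (ε * ‖f y‖^2 + ‖g y‖^2/ε)/2 := by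
      intro y _
      have h1 : 0 ≤ (Real.sqrt ε * ‖f y‖ - ‖g y‖ / Real.sqrt ε)^2 := sq_nonneg _
      have h2 : Real.sqrt ε ^ 2 = ε := Real.sq_sqrt hε.le
      have h3 : 0 < Real.sqrt ε := Real.sqrt_pos.mpr hε
      have h4 : Real.sqrt ε * (‖g y‖ / Real.sqrt ε) = ‖g y‖ := mul_div_cancel₀ _ (ne_of_gt h3)
      have h5 : (‖g y‖ / Real.sqrt ε)^2 = ‖g y‖^2/ε := by rw [div_pow, h2]
      have key := two_mul_le_add_sq (Real.sqrt ε * ‖f y‖) (‖g y‖ / Real.sqrt ε)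
      have hab : (Real.sqrt ε * ‖f y‖) * (‖g y‖ / Real.sqrt ε) = ‖f y‖ * ‖g y‖ := by
        rw [mul_comm (Real.sqrt ε) (‖f y‖), mul_assoc, h4]
      have ha2 : (Real.sqrt ε * ‖f y‖)^2 = ε * ‖f y‖^2 := by rw [mul_pow, h2]
      nlinarith [key, hab, ha2, h5]
    have hi1 : IntervalIntegrable (fun y => ‖f y‖ * ‖g y‖) volume (-1) 1 :=
      (hf.norm.mul hg.norm).intervalIntegrable _ _
    have hi2 : IntervalIntegrable (fun y => (ε * ‖f y‖^2 + ‖g y‖^2/ε)/2) volume (-1) 1 := by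
      apply Continuous.intervalIntegrable
      continuity
    have hmono := intervalIntegral.integral_mono_on (by norm_num : (-1:ℝ) ≤ 1) hi1 hi2 hpt
    have hsplit : (∫ y in (-1:ℝ)..1, (ε * ‖f y‖^2 + ‖g y‖^2/ε)/2) = (ε * A + B / ε)/2 := by
      rw [intervalIntegral.integral_div]
      rw [intervalIntegral.integral_add (f := fun y => ε * ‖f y‖^2) (g := fun y => ‖g y‖^2/ε) (((continuous_const.mul (hf.norm.pow 2))).intervalIntegrable _ _)
        (((hg.norm.pow 2).div_const ε).intervalIntegrable _ _)]
      rw [intervalIntegral.integral_const_mul, intervalIntegral.integral_div]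
      simp [hAdef, hBdef, L2sq]
    linarith [hmono, hsplit.le, hsplit.ge]
  have hfin : ∀ δ : ℝ, 0 < δ →
      (∫ y in (-1:ℝ)..1, ‖f y‖ * ‖g y‖) ≤ Real.sqrt A * Real.sqrt B + δ := by
    intro δ hδ
    set sA := Real.sqrt A with hsA
    set sB := Real.sqrt B with hsB
    have hsA0 : 0 ≤ sA := Real.sqrt_nonneg _
    have hsB0 : 0 ≤ sB := Real.sqrt_nonneg _
    have hsA2 : sA^2 = A := Real.sq_sqrt hA
    have hsB2 : sB^2 = B := Real.sq_sqrt hB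
    set u : ℝ := 2*δ/(sA + sB + 1) with hu
    have hu0 : 0 < u := by positivity
    set ε : ℝ := (sB + u)/(sA + u) with hε
    have hε0 : 0 < ε := by positivity
    have h1 : ε * A ≤ sA * (sB + u) := by
      rw [hε, div_mul_eq_mul_div, div_le_iff₀ (by positivity)]
      have hp1 : 0 ≤ sA * (sB + u) * u := by positivity
      nlinarith [hsA2, hp1, hu0.le, hsA0, hsB0]
    have h2 : B / ε ≤ sB * (sA + u) := by
      rw [hε, div_div_eq_mul_div, div_le_iff₀ (by positivity)]
      have hp2 : 0 ≤ sB * (sA + u) * u := by positivity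
      nlinarith [hsB2, hp2, hu0.le, hsA0, hsB0]
    have h3 := hbase ε hε0
    have h4 : u * (sA + sB) ≤ 2*δ := by
      rw [hu, div_mul_eq_mul_div, div_le_iff₀ (by positivity)]
      nlinarith [hδ.le, hsA0, hsB0]
    calc (∫ y in (-1:ℝ)..1, ‖f y‖ * ‖g y‖) ≤ (ε * A + B / ε)/2 := h3
      _ ≤ (sA * (sB + u) + sB * (sA + u))/2 := by linarith
      _ = sA * sB + u * (sA + sB)/2 := by ring
      _ ≤ sA * sB + δ := by linarith
  exact le_of_forall_pos_le_add hfin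

lemma key_abs (f g : ℝ → ℂ) (hf : Continuous f) (hg : Continuous g) :
    ‖∫ y in (-1:ℝ)..1, f y * (starRingEnd ℂ) (g y)‖ ≤ nn f * nn g := by
  have h1 : ‖∫ y in (-1:ℝ)..1, f y * (starRingEnd ℂ) (g y)‖
      ≤ ∫ y in (-1:ℝ)..1, ‖f y * (starRingEnd ℂ) (g y)‖ :=
    intervalIntegral.norm_integral_le_integral_norm (by norm_num)
  have h2 : (∫ y in (-1:ℝ)..1, ‖f y * (starRingEnd ℂ) (g y)‖)
      = ∫ y in (-1:ℝ)..1, ‖f y‖ * ‖g y‖ := by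
    apply intervalIntegral.integral_congr
    intro y _
    simp [norm_mul]
  rw [h2] at h1
  exact h1.trans (key_cs f g hf hg)

lemma eqOn_Icc_of_Ioo {f g : ℝ → ℂ} (hf : Continuous f) (hg : Continuous g)
    (h : ∀ y ∈ Ioo (-1:ℝ) 1, f y = g y) : EqOn f g (Icc (-1:ℝ) 1) := by
  have h2 := Set.EqOn.closure (fun y hy => h y hy) hf hg
  rwa [closure_Ioo (by norm_num : (-1:ℝ) ≠ 1)] at h2

lemma L2sq_congr {f g : ℝ → ℂ} (h : EqOn f g (Icc (-1:ℝ) 1)) : L2sq f = L2sq g := by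
  unfold L2sq
  apply intervalIntegral.integral_congr
  rw [uIcc_of_le (by norm_num : (-1:ℝ) ≤ 1)]
  intro y hy
  show ‖f y‖^2 = ‖g y‖^2
  rw [h hy]

lemma nn_add (f g : ℝ → ℂ) (hf : Continuous f) (hg : Continuous g) :
    nn (fun y => f y + g y) ≤ nn f + nn g := by
  apply nn_le_of_L2sq_le (add_nonneg (nn_nonneg f) (nn_nonneg g))
  have hpt : ∀ y ∈ Icc (-1:ℝ) 1, ‖f y + g y‖^2 ≤ ‖f y‖^2 + 2*(‖f y‖*‖g y‖) + ‖g y‖^2 := by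
    intro y _
    have h1 := norm_add_le (f y) (g y)
    nlinarith [norm_nonneg (f y), norm_nonneg (g y), norm_nonneg (f y + g y)]
  have hi1 : IntervalIntegrable (fun y => ‖f y + g y‖^2) volume (-1) 1 :=
    ((hf.add hg).norm.pow 2).intervalIntegrable _ _
  have hi2 : IntervalIntegrable (fun y => ‖f y‖^2 + 2*(‖f y‖*‖g y‖) + ‖g y‖^2) volume (-1) 1 :=
    (((hf.norm.pow 2).add (continuous_const.mul (hf.norm.mul hg.norm))).add
      (hg.norm.pow 2)).intervalIntegrable _ _
  have hmono := intervalIntegral.integral_mono_on (by norm_num : (-1:ℝ) ≤ 1) hi1 hi2 hpt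
  have hsplit : (∫ y in (-1:ℝ)..1, (‖f y‖^2 + 2*(‖f y‖*‖g y‖) + ‖g y‖^2))
      = L2sq f + 2*(∫ y in (-1:ℝ)..1, ‖f y‖*‖g y‖) + L2sq g := by
    rw [intervalIntegral.integral_add (f := fun y => ‖f y‖^2 + 2*(‖f y‖*‖g y‖)) (g := fun y => ‖g y‖^2)
      (((hf.norm.pow 2).add (continuous_const.mul (hf.norm.mul hg.norm))).intervalIntegrable _ _)
      ((hg.norm.pow 2).intervalIntegrable _ _)]
    rw [intervalIntegral.integral_add (f := fun y => ‖f y‖^2) (g := fun y => 2*(‖f y‖*‖g y‖)) ((hf.norm.pow 2).intervalIntegrable _ _)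
      ((continuous_const.mul (hf.norm.mul hg.norm)).intervalIntegrable _ _)]
    rw [intervalIntegral.integral_const_mul]
    simp [L2sq]
  have hcs := key_cs f g hf hg
  have : L2sq (fun y => f y + g y) ≤ L2sq f + 2*(∫ y in (-1:ℝ)..1, ‖f y‖*‖g y‖) + L2sq g := by
    rw [← hsplit]; exact hmono
  calc L2sq (fun y => f y + g y) ≤ L2sq f + 2*(nn f * nn g) + L2sq g := by nlinarith
    _ = (nn f + nn g)^2 := by rw [← nn_sq f, ← nn_sq g]; ring

lemma nn_three (f g h : ℝ → ℂ) (hf : Continuous f) (hg : Continuous g) (hh : Continuous h) :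
    nn (fun y => f y + g y + h y) ≤ nn f + nn g + nn h := by
  have h1 : nn (fun y => f y + g y + h y) ≤ nn (fun y => f y + g y) + nn h :=
    nn_add (fun y => f y + g y) h (hf.add hg) hh
  have h2 := nn_add f g hf hg
  linarith

lemma L2sq_const_mul (c : ℂ) (f : ℝ → ℂ) : L2sq (fun y => c * f y) = ‖c‖^2 * L2sq f := by
  unfold L2sq
  rw [← intervalIntegral.integral_const_mul]
  apply intervalIntegral.integral_congr
  intro y _
  show ‖c * f y‖^2 = ‖c‖^2 * ‖f y‖^2
  rw [norm_mul]
  ring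

lemma nn_const_mul (c : ℂ) (f : ℝ → ℂ) : nn (fun y => c * f y) = ‖c‖ * nn f := by
  unfold nn
  rw [L2sq_const_mul, Real.sqrt_mul (by positivity), Real.sqrt_sq (norm_nonneg c)]

lemma nn_const_one : nn (fun _ : ℝ => (1:ℂ)) = Real.sqrt 2 := by
  unfold nn L2sq
  norm_num

lemma poincare (f f' : ℝ → ℂ) (hd : ∀ y, HasDerivAt f (f' y) y) (hc : Continuous f')
    (h0 : f (-1) = 0) : nn f ≤ 2 * nn f' := by
  have hcf : Continuous f := by
    rw [continuous_iff_continuousAt]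
    exact fun y => (hd y).differentiableAt.continuousAt
  have hM : ∀ y ∈ Icc (-1:ℝ) 1, ‖f y‖ ≤ Real.sqrt 2 * nn f' := by
    intro y hy
    have hftc : ∫ z in (-1:ℝ)..y, f' z = f y - f (-1) :=
      intervalIntegral.integral_eq_sub_of_hasDerivAt (fun z _ => hd z) (hc.intervalIntegrable _ _)
    have h1 : ‖f y‖ ≤ ∫ z in (-1:ℝ)..y, ‖f' z‖ := by
      have : ‖f y‖ = ‖∫ z in (-1:ℝ)..y, f' z‖ := by rw [hftc, h0, sub_zero]
      rw [this]
      exact intervalIntegral.norm_integral_le_integral_norm (by linarith [hy.1])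
    have h2 : (∫ z in (-1:ℝ)..y, ‖f' z‖) ≤ ∫ z in (-1:ℝ)..1, ‖f' z‖ := by
      have hadd := intervalIntegral.integral_add_adjacent_intervals
        (f := fun z => ‖f' z‖) (μ := volume) (a := -1) (b := y) (c := 1)
        (hc.norm.intervalIntegrable _ _) (hc.norm.intervalIntegrable _ _)
      have h3 : 0 ≤ ∫ z in y..(1:ℝ), ‖f' z‖ :=
        intervalIntegral.integral_nonneg hy.2 (fun _ _ => norm_nonneg _)
      linarith
    have h3 : (∫ z in (-1:ℝ)..1, ‖f' z‖) ≤ nn f' * Real.sqrt 2 := by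
      have hcs := key_cs f' (fun _ => 1) hc continuous_const
      rw [nn_const_one] at hcs
      simpa using hcs
    calc ‖f y‖ ≤ ∫ z in (-1:ℝ)..1, ‖f' z‖ := le_trans h1 h2
      _ ≤ Real.sqrt 2 * nn f' := by linarith [h3]
  apply nn_le_of_L2sq_le (mul_nonneg (by norm_num) (nn_nonneg f'))
  have hi1 : IntervalIntegrable (fun y => ‖f y‖^2) volume (-1) 1 :=
    (hcf.norm.pow 2).intervalIntegrable _ _
  have hi2 : IntervalIntegrable (fun _ : ℝ => (Real.sqrt 2 * nn f')^2) volume (-1) 1 :=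
    intervalIntegrable_const
  have hmono := intervalIntegral.integral_mono_on (by norm_num : (-1:ℝ) ≤ 1) hi1 hi2
    (fun y hy => by
      have h := hM y hy
      nlinarith [norm_nonneg (f y), Real.sqrt_nonneg 2, nn_nonneg f'])
  have hconst : (∫ _ in (-1:ℝ)..1, (Real.sqrt 2 * nn f')^2) = 2 * (Real.sqrt 2 * nn f')^2 := by
    rw [intervalIntegral.integral_const, smul_eq_mul]
    norm_num
  have hs2 : Real.sqrt 2 ^ 2 = 2 := Real.sq_sqrt (by norm_num)
  calc L2sq f ≤ 2 * (Real.sqrt 2 * nn f')^2 := by rw [← hconst]; exact hmono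
    _ = (2 * nn f')^2 := by rw [mul_pow]; rw [hs2]; ring

lemma hasDerivAt_conjC {f : ℝ → ℂ} {f' : ℂ} {x : ℝ} (h : HasDerivAt f f' x) :
    HasDerivAt (fun y => (starRingEnd ℂ) (f y)) ((starRingEnd ℂ) f') x := by
  have := HasFDerivAt.comp_hasDerivAt x
    ((Complex.conjCLE.toContinuousLinearMap).hasFDerivAt) h
  exact this

lemma ibp (u v u' v' : ℝ → ℂ) (hu : ∀ y, HasDerivAt u (u' y) y) (hv : ∀ y, HasDerivAt v (v' y) y)
    (hcu' : Continuous u') (hcv' : Continuous v') :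
    ∫ y in (-1:ℝ)..1, (u' y * v y + u y * v' y) = u 1 * v 1 - u (-1) * v (-1) :=
  intervalIntegral.integral_deriv_mul_eq_sub (fun y _ => hu y) (fun y _ => hv y)
    (hcu'.intervalIntegrable _ _) (hcv'.intervalIntegrable _ _)

lemma integral_mul_conj_self (f : ℝ → ℂ) :
    ∫ y in (-1:ℝ)..1, f y * (starRingEnd ℂ) (f y) = ((L2sq f : ℝ) : ℂ) := by
  unfold L2sq
  rw [← intervalIntegral.integral_ofReal]
  apply intervalIntegral.integral_congr
  intro y _
  show f y * (starRingEnd ℂ) (f y) = ((‖f y‖^2 : ℝ) : ℂ)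
  rw [Complex.mul_conj]
  norm_cast
  rw [Complex.normSq_eq_norm_sq]

lemma energy (k : ℝ) (X X1 X2 F : ℝ → ℂ)
    (hdX : ∀ y, HasDerivAt X (X1 y) y) (hdX1 : ∀ y, HasDerivAt X1 (X2 y) y)
    (hcX : Continuous X) (hcX1 : Continuous X1) (hcX2 : Continuous X2) (hcF : Continuous F)
    (hm : X (-1) = 0) (hp : X 1 = 0)
    (heq : ∀ y ∈ Ioo (-1:ℝ) 1, X2 y - (k:ℂ)^2 * X y = - F y) :
    L2sq X1 + k^2 * L2sq X = ‖∫ y in (-1:ℝ)..1, F y * (starRingEnd ℂ) (X y)‖ := by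
  have hdXc : ∀ y, HasDerivAt (fun z => (starRingEnd ℂ) (X z)) ((starRingEnd ℂ) (X1 y)) y :=
    fun y => hasDerivAt_conjC (hdX y)
  have hcXc : Continuous (fun z => (starRingEnd ℂ) (X z)) := Complex.continuous_conj.comp hcX
  have hcX1c : Continuous (fun z => (starRingEnd ℂ) (X1 z)) := Complex.continuous_conj.comp hcX1
  have hibp := ibp X1 (fun z => (starRingEnd ℂ) (X z)) X2 (fun z => (starRingEnd ℂ) (X1 z))
    hdX1 hdXc hcX2 hcX1c
  beta_reduce at hibp
  rw [hp, hm] at hibp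
  simp only [map_zero, mul_zero, sub_zero, zero_sub, sub_self] at hibp
  have hsplit : (∫ y in (-1:ℝ)..1, (X2 y * (starRingEnd ℂ) (X y) + X1 y * (starRingEnd ℂ) (X1 y)))
      = (∫ y in (-1:ℝ)..1, X2 y * (starRingEnd ℂ) (X y))
        + ∫ y in (-1:ℝ)..1, X1 y * (starRingEnd ℂ) (X1 y) := by
    apply intervalIntegral.integral_add
    · exact (hcX2.mul hcXc).intervalIntegrable _ _
    · exact (hcX1.mul hcX1c).intervalIntegrable _ _
  rw [hsplit] at hibp
  have hI1 : (∫ y in (-1:ℝ)..1, X2 y * (starRingEnd ℂ) (X y)) = -((L2sq X1 : ℝ) : ℂ) := by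
    rw [← integral_mul_conj_self X1]
    linear_combination hibp
  have hcong : (∫ y in (-1:ℝ)..1, (X2 y - (k:ℂ)^2 * X y) * (starRingEnd ℂ) (X y))
      = ∫ y in (-1:ℝ)..1, (- F y) * (starRingEnd ℂ) (X y) := by
    apply intervalIntegral.integral_congr
    rw [uIcc_of_le (by norm_num : (-1:ℝ) ≤ 1)]
    intro y hy
    have hEq := eqOn_Icc_of_Ioo (f := fun y => X2 y - (k:ℂ)^2 * X y) (g := fun y => - F y)
      (hcX2.sub (continuous_const.mul hcX)) hcF.neg heq
    have h5 : X2 y - (k:ℂ)^2 * X y = - F y := hEq hy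
    show (X2 y - (k:ℂ)^2 * X y) * (starRingEnd ℂ) (X y) = - F y * (starRingEnd ℂ) (X y)
    rw [h5]
  have hsplit2 : (∫ y in (-1:ℝ)..1, (X2 y - (k:ℂ)^2 * X y) * (starRingEnd ℂ) (X y))
      = (∫ y in (-1:ℝ)..1, X2 y * (starRingEnd ℂ) (X y))
        - (k:ℂ)^2 * ∫ y in (-1:ℝ)..1, X y * (starRingEnd ℂ) (X y) := by
    rw [← intervalIntegral.integral_const_mul]
    rw [← intervalIntegral.integral_sub (f := fun y => X2 y * (starRingEnd ℂ) (X y)) (g := fun y => (k:ℂ)^2 * (X y * (starRingEnd ℂ) (X y))) ((hcX2.mul hcXc).intervalIntegrable _ _)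
      ((continuous_const.mul (hcX.mul hcXc)).intervalIntegrable _ _)]
    apply intervalIntegral.integral_congr
    intro y _
    ring
  have hneg : (∫ y in (-1:ℝ)..1, (- F y) * (starRingEnd ℂ) (X y))
      = - ∫ y in (-1:ℝ)..1, F y * (starRingEnd ℂ) (X y) := by
    rw [← intervalIntegral.integral_neg]
    apply intervalIntegral.integral_congr
    intro y _
    ring
  rw [hsplit2, hI1, integral_mul_conj_self X, hneg] at hcong
  have hfin : (∫ y in (-1:ℝ)..1, F y * (starRingEnd ℂ) (X y))
      = (((L2sq X1 + k^2 * L2sq X : ℝ)) : ℂ) := by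
    push_cast
    linear_combination hcong
  rw [hfin, norm_ofRealC,
    _root_.abs_of_nonneg (add_nonneg (L2sq_nonneg _) (mul_nonneg (sq_nonneg k) (L2sq_nonneg _)))]

end Psi1Aux

set_option maxHeartbeats 16000000 in
open Psi1Aux in
/-- Low-frequency estimate for `ψ₁ = ∂_y ψ + ikt ψ`:
`‖(∂_y,1)ψ₁‖ ≤ C (1+|k|t)^{-1} ‖(∂_y,1)²(e^{ikyt}w)‖` for `0 < |k| ≤ 1`. -/
theorem psi1_lowfreq :
    ∃ C > (0 : ℝ), ∀ (k t : ℝ) (ψ w : ℝ → ℂ),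
      k ≠ 0 → |k| ≤ 1 → 0 ≤ t →
      ContDiff ℝ 3 ψ → ContDiff ℝ 2 w →
      ψ (-1) = 0 → ψ 1 = 0 → w (-1) = 0 → w 1 = 0 →
      (∀ y ∈ Ioo (-1 : ℝ) 1, deriv (deriv ψ) y - (k : ℂ) ^ 2 * ψ y = -w y) →
      Real.sqrt
          (L2sq (deriv (fun y => deriv ψ y + Complex.I * (k : ℂ) * (t : ℂ) * ψ y))
            + L2sq (fun y => deriv ψ y + Complex.I * (k : ℂ) * (t : ℂ) * ψ y))
        ≤ C * (1 + |k| * t)⁻¹ * Real.sqrt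
            (L2sq (deriv (deriv (ew k t w))) + L2sq (deriv (ew k t w)) + L2sq w) := by
  refine ⟨100, by norm_num, ?_⟩
  intro k t ψ w hk hk1 ht hψ hw hψm hψp hwm hwp heqn
  set ξ : ℝ := k * t with hξdef
  have hs_eq : |k| * t = |ξ| := by
    rw [hξdef, abs_mul, abs_of_nonneg ht]
  set s : ℝ := |ξ| with hsdef
  have hs0 : 0 ≤ s := abs_nonneg _
  have hs2 : s^2 = ξ^2 := sq_abs ξ
  have hk2pos : 0 < k^2 := by
    have := abs_pos.mpr hk
    nlinarith [sq_abs k]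
  have hk2le : k^2 ≤ 1 := by nlinarith [sq_abs k, abs_nonneg k]
  set κ : ℝ := k^2 + ξ^2 with hκdef
  have hκpos : 0 < κ := by nlinarith [sq_nonneg ξ]
  have hκc0 : ((κ:ℝ):ℂ) ≠ 0 := by
    exact_mod_cast ne_of_gt hκpos
  have hκc' : ((κ:ℝ):ℂ) = (k:ℂ)^2 + ((ξ:ℝ):ℂ)^2 := by rw [hκdef]; push_cast; ring
  have hcast : ((ξ:ℝ):ℂ) = (k:ℂ) * (t:ℂ) := by rw [hξdef]; push_cast; ring
  -- regularity of ψ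
  have hψ'2 : ContDiff ℝ 2 (deriv ψ) := by
    have h := (contDiff_succ_iff_deriv (n := 2) (f := ψ)).mp (by
      show ContDiff ℝ ((2:WithTop ℕ∞)+1) ψ
      exact hψ)
    exact h.2.2
  set ψ1 : ℝ → ℂ := deriv ψ with hψ1def
  have hψd : Differentiable ℝ ψ := hψ.differentiable (by norm_num)
  have hψ1d : Differentiable ℝ ψ1 := hψ'2.differentiable (by norm_num)
  set ψ2 : ℝ → ℂ := deriv ψ1 with hψ2def
  have hψ''1 : ContDiff ℝ 1 ψ2 := by
    have h := (contDiff_succ_iff_deriv (n := 1) (f := ψ1)).mp (by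
      show ContDiff ℝ ((1:WithTop ℕ∞)+1) ψ1
      exact hψ'2)
    exact h.2.2
  have hcψ : Continuous ψ := hψ.continuous
  have hcψ1 : Continuous ψ1 := hψ'2.continuous
  have hcψ2 : Continuous ψ2 := hψ''1.continuous
  have hdψ : ∀ y, HasDerivAt ψ (ψ1 y) y := fun y => (hψd y).hasDerivAt
  have hdψ1 : ∀ y, HasDerivAt ψ1 (ψ2 y) y := fun y => (hψ1d y).hasDerivAt
  -- regularity of w
  have hw'1 : ContDiff ℝ 1 (deriv w) := by
    have h := (contDiff_succ_iff_deriv (n := 1) (f := w)).mp (by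
      show ContDiff ℝ ((1:WithTop ℕ∞)+1) w
      exact hw)
    exact h.2.2
  set w1 : ℝ → ℂ := deriv w with hw1def
  have hwd : Differentiable ℝ w := hw.differentiable (by norm_num)
  have hw1d : Differentiable ℝ w1 := hw'1.differentiable (by norm_num)
  set w2 : ℝ → ℂ := deriv w1 with hw2def
  have hcw : Continuous w := hw.continuous
  have hcw1 : Continuous w1 := hw'1.continuous
  have hcw2 : Continuous w2 := by
    have h := (contDiff_succ_iff_deriv (n := 0) (f := w1)).mp (by
      show ContDiff ℝ ((0:WithTop ℕ∞)+1) w1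
      exact hw'1)
    exact h.2.2.continuous
  have hdw : ∀ y, HasDerivAt w (w1 y) y := fun y => (hwd y).hasDerivAt
  have hdw1 : ∀ y, HasDerivAt w1 (w2 y) y := fun y => (hw1d y).hasDerivAt
  -- the exponential factor
  set m : ℝ → ℂ := ew k t w with hmdef
  set E : ℝ → ℂ := fun y : ℝ => Complex.exp (Complex.I * (k : ℂ) * (y : ℂ) * (t : ℂ)) with hEdef
  have hdE : ∀ y, HasDerivAt E (Complex.I * ((ξ:ℝ):ℂ) * E y) y := by
    intro y
    have h0 : HasDerivAt (fun y : ℝ => (y:ℂ)) 1 y := by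
      exact Complex.ofRealCLM.hasDerivAt (x := y)
    have h1 : HasDerivAt (fun y : ℝ => Complex.I * (k : ℂ) * (y:ℂ) * (t:ℂ))
        (Complex.I * (k:ℂ) * (t:ℂ)) y := by
      have h2 := (h0.const_mul (Complex.I * (k:ℂ))).mul_const (t:ℂ)
      simpa using h2
    have h3 := h1.cexp
    convert h3 using 1
    rw [hcast]
    ring
  have hE1 : ∀ y, ‖E y‖ = 1 := by
    intro y
    rw [hEdef]
    simp only [Complex.norm_exp]
    norm_num [Complex.mul_re, Complex.mul_im]
  set a : ℝ → ℂ := fun y => w1 y + Complex.I * ((ξ:ℝ):ℂ) * w y with hadef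
  set b : ℝ → ℂ := fun y => w2 y + 2 * Complex.I * ((ξ:ℝ):ℂ) * w1 y - ((ξ:ℝ):ℂ)^2 * w y with hbdef
  have hca : Continuous a := hcw1.add (continuous_const.mul hcw)
  have hcb : Continuous b := (hcw2.add (continuous_const.mul hcw1)).sub (continuous_const.mul hcw)
  have hda : ∀ y, HasDerivAt a (b y - Complex.I * ((ξ:ℝ):ℂ) * a y) y := by
    intro y
    have h1 : HasDerivAt a (w2 y + Complex.I * ((ξ:ℝ):ℂ) * w1 y) y :=
      (hdw1 y).add ((hdw y).const_mul _)
    convert h1 using 1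
    simp only [hbdef, hadef]
    linear_combination (-(((ξ:ℝ):ℂ))^2 * w y) * Complex.I_sq
  have hdm : ∀ y, HasDerivAt m (E y * a y) y := by
    intro y
    have h2 : HasDerivAt m (Complex.I * ((ξ:ℝ):ℂ) * E y * w y + E y * w1 y) y := (hdE y).mul (hdw y)
    convert h2 using 1
    simp only [hadef]
    ring
  have hderivm : deriv m = fun y => E y * a y := funext fun y => (hdm y).deriv
  have hdm2 : ∀ y, HasDerivAt (fun z => E z * a z) (E y * b y) y := by
    intro y
    have h1 := (hdE y).mul (hda y)
    exact h1.congr_deriv (by ring)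
  have hderivm2 : deriv (deriv m) = fun y => E y * b y := by
    rw [hderivm]
    exact funext fun y => (hdm2 y).deriv
  have hL2E : ∀ f : ℝ → ℂ, L2sq (fun y => E y * f y) = L2sq f := by
    intro f
    unfold L2sq
    apply intervalIntegral.integral_congr
    intro y _
    show ‖E y * f y‖^2 = ‖f y‖^2
    rw [norm_mul, hE1 y, one_mul]
  set Nr : ℝ := Real.sqrt (L2sq (deriv (deriv m)) + L2sq (deriv m) + L2sq w) with hNrdef
  have hNr0 : 0 ≤ Nr := Real.sqrt_nonneg _
  have hsum0 : L2sq (deriv (deriv m)) + L2sq (deriv m) + L2sq w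
      = L2sq b + L2sq a + L2sq w := by
    rw [hderivm2, hderivm, hL2E, hL2E]
  have hb_le : nn b ≤ Nr := by
    rw [hNrdef, hsum0]
    exact Real.sqrt_le_sqrt (by nlinarith [L2sq_nonneg a, L2sq_nonneg w])
  have ha_le : nn a ≤ Nr := by
    rw [hNrdef, hsum0]
    exact Real.sqrt_le_sqrt (by nlinarith [L2sq_nonneg b, L2sq_nonneg w])
  have hw_le : nn w ≤ Nr := by
    rw [hNrdef, hsum0]
    exact Real.sqrt_le_sqrt (by nlinarith [L2sq_nonneg b, L2sq_nonneg a])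
  -- ψ₁
  set P1 : ℝ → ℂ := fun y => ψ1 y + Complex.I * (k : ℂ) * (t : ℂ) * ψ y with hP1def
  have hcP1 : Continuous P1 := hcψ1.add (continuous_const.mul hcψ)
  have hdP1 : ∀ y, HasDerivAt P1 (ψ2 y + Complex.I * ((ξ:ℝ):ℂ) * ψ1 y) y := by
    intro y
    have h1 := (hdψ1 y).add ((hdψ y).const_mul (Complex.I * (k:ℂ) * (t:ℂ)))
    exact h1.congr_deriv (by rw [hcast]; ring)
  have hderivP1 : deriv P1 = fun y => ψ2 y + Complex.I * ((ξ:ℝ):ℂ) * ψ1 y :=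
    funext fun y => (hdP1 y).deriv
  have hnormIkt : ‖Complex.I * (k:ℂ) * (t:ℂ)‖ = s := by
    rw [norm_mul, norm_mul, Complex.norm_I, one_mul, norm_ofRealC, norm_ofRealC,
      abs_of_nonneg ht, hs_eq]
  have hnormIξ : ‖Complex.I * ((ξ:ℝ):ℂ)‖ = s := by
    rw [norm_mul, Complex.norm_I, one_mul, norm_ofRealC]
  have hnormk2 : ‖((k:ℂ))^2‖ = k^2 := by rw [norm_pow, norm_ofRealC, sq_abs]
  have hnormκinv : ‖(((κ:ℝ):ℂ))⁻¹‖ = κ⁻¹ := by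
    rw [norm_inv, norm_ofRealC, abs_of_pos hκpos]
  rw [hs_eq]
  rcases le_total s 1 with hsle | hsge
  · -- low-frequency-time case s ≤ 1
    have hEnψ := energy k ψ ψ1 ψ2 w hdψ hdψ1 hcψ hcψ1 hcψ2 hcw hψm hψp heqn
    have hcsψ : ‖∫ y in (-1:ℝ)..1, w y * (starRingEnd ℂ) (ψ y)‖ ≤ nn w * nn ψ :=
      key_abs w ψ hcw hcψ
    have hPoψ : nn ψ ≤ 2 * nn ψ1 := poincare ψ ψ1 hdψ hcψ1 hψm
    have hψ1bd : nn ψ1 ≤ 2 * nn w := by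
      by_contra hcon
      push_neg at hcon
      have h2 : L2sq ψ1 ≤ L2sq ψ1 + k^2 * L2sq ψ := by
        nlinarith [L2sq_nonneg ψ, hk2pos.le]
      rw [hEnψ] at h2
      have h1 : L2sq ψ1 ≤ nn w * nn ψ := le_trans h2 hcsψ
      rw [← nn_sq] at h1
      nlinarith [nn_nonneg ψ1, nn_nonneg w, nn_nonneg ψ]
    have hψbd : nn ψ ≤ 4 * nn w := by linarith
    have hP1bd : nn P1 ≤ 6 * nn w := by
      have h1 : nn P1 ≤ nn ψ1 + nn (fun y => Complex.I * (k:ℂ) * (t:ℂ) * ψ y) :=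
        nn_add ψ1 (fun y => Complex.I * (k:ℂ) * (t:ℂ) * ψ y) hcψ1 (continuous_const.mul hcψ)
      rw [nn_const_mul, hnormIkt] at h1
      nlinarith [nn_nonneg ψ, nn_nonneg ψ1, nn_nonneg w, hs0]
    have hder_eq : L2sq (deriv P1)
        = L2sq (fun y => ((k:ℂ)^2) * ψ y + ((-1:ℂ)) * w y + (Complex.I * ((ξ:ℝ):ℂ)) * ψ1 y) := by
      rw [hderivP1]
      apply L2sq_congr
      apply eqOn_Icc_of_Ioo
      · exact hcψ2.add (continuous_const.mul hcψ1)
      · exact ((continuous_const.mul hcψ).add (continuous_const.mul hcw)).add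
          (continuous_const.mul hcψ1)
      · intro y hy
        have h1 := heqn y hy
        show ψ2 y + Complex.I * ((ξ:ℝ):ℂ) * ψ1 y
            = ((k:ℂ)^2) * ψ y + ((-1:ℂ)) * w y + (Complex.I * ((ξ:ℝ):ℂ)) * ψ1 y
        linear_combination h1
    have hdP1bd : nn (fun y => ((k:ℂ)^2) * ψ y + ((-1:ℂ)) * w y + (Complex.I * ((ξ:ℝ):ℂ)) * ψ1 y)
        ≤ 7 * nn w := by
      have h1 : nn (fun y => ((k:ℂ)^2) * ψ y + ((-1:ℂ)) * w y + (Complex.I * ((ξ:ℝ):ℂ)) * ψ1 y)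
          ≤ nn (fun y => ((k:ℂ)^2) * ψ y) + nn (fun y => ((-1:ℂ)) * w y)
            + nn (fun y => (Complex.I * ((ξ:ℝ):ℂ)) * ψ1 y) :=
        nn_three _ _ _ (continuous_const.mul hcψ) (continuous_const.mul hcw)
          (continuous_const.mul hcψ1)
      rw [nn_const_mul, nn_const_mul, nn_const_mul, hnormIξ, hnormk2] at h1
      have e2 : ‖(-1 : ℂ)‖ = 1 := by norm_num
      rw [e2] at h1
      nlinarith [nn_nonneg ψ, nn_nonneg ψ1, nn_nonneg w, hψbd, hψ1bd, hsle, hs0, hk2le,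
        hk2pos.le]
    have hL1 : L2sq (deriv P1) ≤ (7*Nr)^2 := by
      rw [hder_eq, ← nn_sq]
      have h : nn (fun y => ((k:ℂ)^2) * ψ y + ((-1:ℂ)) * w y + (Complex.I * ((ξ:ℝ):ℂ)) * ψ1 y)
          ≤ 7*Nr := by nlinarith [hdP1bd, hw_le, nn_nonneg w]
      nlinarith [nn_nonneg (fun y => ((k:ℂ)^2) * ψ y + ((-1:ℂ)) * w y
        + (Complex.I * ((ξ:ℝ):ℂ)) * ψ1 y), hNr0]
    have hL2 : L2sq P1 ≤ (6*Nr)^2 := by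
      rw [← nn_sq]
      have h : nn P1 ≤ 6*Nr := by nlinarith [hP1bd, hw_le, nn_nonneg w]
      nlinarith [nn_nonneg P1, hNr0]
    have h10 : Real.sqrt (L2sq (deriv P1) + L2sq P1) ≤ 10*Nr := by
      have hsum : L2sq (deriv P1) + L2sq P1 ≤ (10*Nr)^2 := by nlinarith [hNr0]
      have h := Real.sqrt_le_sqrt hsum
      rwa [Real.sqrt_sq (by positivity)] at h
    have hrhs : 10*Nr ≤ 100 * (1+s)⁻¹ * Nr := by
      have hinv : (2:ℝ)⁻¹ ≤ (1+s)⁻¹ := by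
        apply inv_anti₀
        · linarith
        · linarith
      nlinarith [hNr0]
    linarith
  · -- main case s ≥ 1
    have hspos : 0 < s := lt_of_lt_of_le one_pos hsge
    have hsκ : s^2 ≤ κ := by nlinarith [hs2, hk2pos]
    set R : ℝ → ℂ := fun y => ψ y - w y / ((κ:ℝ):ℂ) with hRdef
    set R1 : ℝ → ℂ := fun y => ψ1 y - w1 y / ((κ:ℝ):ℂ) with hR1def
    set R2 : ℝ → ℂ := fun y => ψ2 y - w2 y / ((κ:ℝ):ℂ) with hR2def
    have hcR : Continuous R := hcψ.sub (hcw.div_const _)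
    have hcR1 : Continuous R1 := hcψ1.sub (hcw1.div_const _)
    have hcR2 : Continuous R2 := hcψ2.sub (hcw2.div_const _)
    have hcRc : Continuous (fun z => (starRingEnd ℂ) (R z)) := Complex.continuous_conj.comp hcR
    have hcR1c : Continuous (fun z => (starRingEnd ℂ) (R1 z)) := Complex.continuous_conj.comp hcR1
    have hdR : ∀ y, HasDerivAt R (R1 y) y := fun y => (hdψ y).sub ((hdw y).div_const _)
    have hdR1 : ∀ y, HasDerivAt R1 (R2 y) y := fun y => (hdψ1 y).sub ((hdw1 y).div_const _)
    have hRm : R (-1) = 0 := by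
      show ψ (-1) - w (-1) / ((κ:ℝ):ℂ) = 0
      rw [hψm, hwm]
      simp
    have hRp : R 1 = 0 := by
      show ψ 1 - w 1 / ((κ:ℝ):ℂ) = 0
      rw [hψp, hwp]
      simp
    have hReq : ∀ y ∈ Ioo (-1:ℝ) 1,
        R2 y - (k:ℂ)^2 * R y = -((w2 y + ((ξ:ℝ):ℂ)^2 * w y) / ((κ:ℝ):ℂ)) := by
      intro y hy
      have h1 := heqn y hy
      show ψ2 y - w2 y / ((κ:ℝ):ℂ) - (k:ℂ)^2 * (ψ y - w y / ((κ:ℝ):ℂ))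
          = -((w2 y + ((ξ:ℝ):ℂ)^2 * w y) / ((κ:ℝ):ℂ))
      have h2 : (ψ2 y - (k:ℂ)^2 * ψ y) = -w y := h1
      field_simp
      linear_combination ((κ:ℝ):ℂ) * h2 - w y * hκc'
    have hcF : Continuous (fun y => (w2 y + ((ξ:ℝ):ℂ)^2 * w y) / ((κ:ℝ):ℂ)) :=
      (hcw2.add (continuous_const.mul hcw)).div_const _
    have hEn := energy k R R1 R2 (fun y => (w2 y + ((ξ:ℝ):ℂ)^2 * w y) / ((κ:ℝ):ℂ))
      hdR hdR1 hcR hcR1 hcR2 hcF hRm hRp hReq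
    set IB : ℂ := ∫ y in (-1:ℝ)..1, b y * (starRingEnd ℂ) (R y) with hIBdef
    set IA : ℂ := ∫ y in (-1:ℝ)..1, a y * (starRingEnd ℂ) (R y) with hIAdef
    set IC : ℂ := ∫ y in (-1:ℝ)..1, a y * (starRingEnd ℂ) (R1 y) with hICdef
    have hIsplit : (∫ y in (-1:ℝ)..1,
          ((w2 y + ((ξ:ℝ):ℂ)^2 * w y) / ((κ:ℝ):ℂ)) * (starRingEnd ℂ) (R y))
        = (((κ:ℝ):ℂ))⁻¹ * (IB - 2*Complex.I*((ξ:ℝ):ℂ) * IA) := by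
      rw [hIBdef, hIAdef, ← intervalIntegral.integral_const_mul,
        ← intervalIntegral.integral_sub (f := fun y => b y * (starRingEnd ℂ) (R y)) (g := fun y => 2*Complex.I*((ξ:ℝ):ℂ) * (a y * (starRingEnd ℂ) (R y))) ((hcb.mul hcRc).intervalIntegrable _ _)
          ((continuous_const.mul (hca.mul hcRc)).intervalIntegrable _ _),
        ← intervalIntegral.integral_const_mul]
      apply intervalIntegral.integral_congr
      intro y _
      show ((w2 y + ((ξ:ℝ):ℂ)^2 * w y) / ((κ:ℝ):ℂ)) * (starRingEnd ℂ) (R y)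
          = ((κ:ℝ):ℂ)⁻¹ * (b y * (starRingEnd ℂ) (R y)
            - 2*Complex.I*((ξ:ℝ):ℂ) * (a y * (starRingEnd ℂ) (R y)))
      have hba : (w2 y + ((ξ:ℝ):ℂ)^2 * w y) / ((κ:ℝ):ℂ)
          = ((κ:ℝ):ℂ)⁻¹ * (b y - 2*Complex.I*((ξ:ℝ):ℂ) * a y) := by
        simp only [hadef, hbdef]
        rw [div_eq_mul_inv]
        linear_combination (2*((ξ:ℝ):ℂ)^2 * w y * (((κ:ℝ):ℂ))⁻¹) * Complex.I_sq
      calc ((w2 y + ((ξ:ℝ):ℂ)^2 * w y) / ((κ:ℝ):ℂ)) * (starRingEnd ℂ) (R y)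
          = (((κ:ℝ):ℂ)⁻¹ * (b y - 2*Complex.I*((ξ:ℝ):ℂ) * a y)) * (starRingEnd ℂ) (R y) := by
            rw [hba]
        _ = ((κ:ℝ):ℂ)⁻¹ * (b y * (starRingEnd ℂ) (R y)
            - 2*Complex.I*((ξ:ℝ):ℂ) * (a y * (starRingEnd ℂ) (R y))) := by ring
    have hosc : Complex.I * ((ξ:ℝ):ℂ) * IA = IB + IC := by
      have hibp0 := ibp a (fun z => (starRingEnd ℂ) (R z))
        (fun y => b y - Complex.I*((ξ:ℝ):ℂ)*a y) (fun z => (starRingEnd ℂ) (R1 z))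
        hda (fun y => hasDerivAt_conjC (hdR y))
        (hcb.sub (continuous_const.mul hca)) hcR1c
      beta_reduce at hibp0
      rw [hRp, hRm] at hibp0
      simp only [map_zero, mul_zero, sub_zero, sub_self] at hibp0
      have e1 : (∫ y in (-1:ℝ)..1, ((b y - Complex.I*((ξ:ℝ):ℂ)*a y) * (starRingEnd ℂ) (R y)
            + a y * (starRingEnd ℂ) (R1 y)))
          = (IB - Complex.I*((ξ:ℝ):ℂ)*IA) + IC := by
        rw [hIBdef, hIAdef, hICdef, ← intervalIntegral.integral_const_mul,
          ← intervalIntegral.integral_sub (f := fun y => b y * (starRingEnd ℂ) (R y)) (g := fun y => Complex.I*((ξ:ℝ):ℂ) * (a y * (starRingEnd ℂ) (R y))) ((hcb.mul hcRc).intervalIntegrable _ _)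
            ((continuous_const.mul (hca.mul hcRc)).intervalIntegrable _ _),
          ← intervalIntegral.integral_add (f := fun y => b y * (starRingEnd ℂ) (R y) - Complex.I*((ξ:ℝ):ℂ) * (a y * (starRingEnd ℂ) (R y))) (g := fun y => a y * (starRingEnd ℂ) (R1 y))
            (((hcb.mul hcRc).sub (continuous_const.mul (hca.mul hcRc))).intervalIntegrable _ _)
            ((hca.mul hcR1c).intervalIntegrable _ _)]
        apply intervalIntegral.integral_congr
        intro y _
        show (b y - Complex.I*((ξ:ℝ):ℂ)*a y) * (starRingEnd ℂ) (R y)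
            + a y * (starRingEnd ℂ) (R1 y)
          = b y * (starRingEnd ℂ) (R y) - Complex.I*((ξ:ℝ):ℂ) * (a y * (starRingEnd ℂ) (R y))
            + a y * (starRingEnd ℂ) (R1 y)
        ring
      rw [e1] at hibp0
      linear_combination -hibp0
    have hIBbd : ‖IB‖ ≤ nn b * nn R := key_abs b R hcb hcR
    have hICbd : ‖IC‖ ≤ nn a * nn R1 := key_abs a R1 hca hcR1
    have hIAbd : s * ‖IA‖ ≤ nn b * nn R + nn a * nn R1 := by
      have h1 : ‖Complex.I * ((ξ:ℝ):ℂ) * IA‖ = s * ‖IA‖ := by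
        rw [norm_mul, hnormIξ]
      calc s * ‖IA‖ = ‖Complex.I * ((ξ:ℝ):ℂ) * IA‖ := h1.symm
        _ = ‖IB + IC‖ := by rw [hosc]
        _ ≤ ‖IB‖ + ‖IC‖ := norm_add_le _ _
        _ ≤ nn b * nn R + nn a * nn R1 := add_le_add hIBbd hICbd
    have hPo : nn R ≤ 2 * nn R1 := poincare R R1 hdR hcR1 hRm
    have hEbd : κ * L2sq R1 ≤ 8 * Nr * nn R1 := by
      have h3 : ‖IB - 2*Complex.I*((ξ:ℝ):ℂ) * IA‖ ≤ ‖IB‖ + 2*s*‖IA‖ := by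
        calc ‖IB - 2*Complex.I*((ξ:ℝ):ℂ) * IA‖
            ≤ ‖IB‖ + ‖2*Complex.I*((ξ:ℝ):ℂ) * IA‖ := norm_sub_le _ _
          _ = ‖IB‖ + 2*s*‖IA‖ := by
              rw [norm_mul, norm_mul, norm_mul, Complex.norm_I, norm_ofRealC]
              norm_num
              exact Or.inl hsdef.symm
      have h1 : L2sq R1 + k^2 * L2sq R ≤ κ⁻¹ * (‖IB‖ + 2*s*‖IA‖) := by
        rw [hEn, hIsplit, norm_mul, hnormκinv]
        exact mul_le_mul_of_nonneg_left h3 (inv_nonneg.mpr hκpos.le)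
      have e1 : nn b * nn R ≤ Nr * (2*nn R1) :=
        mul_le_mul hb_le hPo (nn_nonneg R) hNr0
      have e2 : nn a * nn R1 ≤ Nr * nn R1 :=
        mul_le_mul_of_nonneg_right ha_le (nn_nonneg R1)
      have h4 : L2sq R1 ≤ κ⁻¹ * (8 * Nr * nn R1) := by
        calc L2sq R1 ≤ L2sq R1 + k^2 * L2sq R := by nlinarith [L2sq_nonneg R, hk2pos.le]
          _ ≤ κ⁻¹ * (‖IB‖ + 2*s*‖IA‖) := h1
          _ ≤ κ⁻¹ * (8 * Nr * nn R1) := by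
              apply mul_le_mul_of_nonneg_left _ (inv_nonneg.mpr hκpos.le)
              nlinarith [hIBbd, hIAbd, e1, e2, norm_nonneg IA]
      calc κ * L2sq R1 ≤ κ * (κ⁻¹ * (8*Nr*nn R1)) := mul_le_mul_of_nonneg_left h4 hκpos.le
        _ = 8*Nr*nn R1 := by field_simp
    have hR1bd : κ * nn R1 ≤ 8 * Nr := by
      by_contra hcon
      push_neg at hcon
      have h5 : κ * (nn R1)^2 ≤ 8*Nr*nn R1 := by rw [nn_sq]; exact hEbd
      nlinarith [nn_nonneg R1, hκpos, hNr0]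
    have hRbd : κ * nn R ≤ 16 * Nr := by
      nlinarith [hPo, mul_nonneg hκpos.le (by linarith [hPo] : (0:ℝ) ≤ 2*nn R1 - nn R), hR1bd]
    have hP1alt : P1 = fun y => R1 y + (Complex.I * ((ξ:ℝ):ℂ)) * R y
        + (((κ:ℝ):ℂ))⁻¹ * a y := by
      funext y
      show ψ1 y + Complex.I * (k:ℂ) * (t:ℂ) * ψ y = _
      simp only [hR1def, hRdef, hadef]
      rw [hcast]
      field_simp
      ring
    have hP1s : s * nn P1 ≤ 25 * Nr := by
      have h1 : nn P1 ≤ nn R1 + nn (fun y => (Complex.I * ((ξ:ℝ):ℂ)) * R y)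
          + nn (fun y => (((κ:ℝ):ℂ))⁻¹ * a y) := by
        rw [hP1alt]
        exact nn_three _ _ _ hcR1 (continuous_const.mul hcR) (continuous_const.mul hca)
      rw [nn_const_mul, nn_const_mul, hnormIξ, hnormκinv] at h1
      have t1 : s * nn R1 ≤ 8 * Nr := by
        nlinarith [hR1bd, mul_nonneg (mul_nonneg hspos.le (by linarith : (0:ℝ) ≤ s - 1))
          (nn_nonneg R1), mul_nonneg (by linarith [hsκ] : (0:ℝ) ≤ κ - s^2) (nn_nonneg R1)]
      have t2 : s * (s * nn R) ≤ 16 * Nr := by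
        nlinarith [hRbd, mul_nonneg (by linarith [hsκ] : (0:ℝ) ≤ κ - s^2) (nn_nonneg R)]
      have t3 : s * (κ⁻¹ * nn a) ≤ Nr := by
        have e4 : s * (κ⁻¹ * nn a) = (s/κ) * nn a := by ring
        rw [e4]
        have e5 : s/κ ≤ 1 := by
          rw [div_le_one hκpos]
          nlinarith
        calc (s/κ) * nn a ≤ 1 * nn a :=
            mul_le_mul_of_nonneg_right e5 (nn_nonneg a)
          _ = nn a := one_mul _
          _ ≤ Nr := ha_le
      calc s * nn P1 ≤ s * (nn R1 + s * nn R + κ⁻¹ * nn a) :=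
            mul_le_mul_of_nonneg_left h1 hspos.le
        _ = s*nn R1 + s*(s*nn R) + s*(κ⁻¹*nn a) := by ring
        _ ≤ 8*Nr + 16*Nr + Nr := by linarith [t1, t2, t3]
        _ = 25*Nr := by ring
    set G2 : ℝ → ℂ := fun y => ((k:ℂ)^2) * R y + (Complex.I * ((ξ:ℝ):ℂ)) * R1 y
      + (Complex.I * ((ξ:ℝ):ℂ) * (((κ:ℝ):ℂ))⁻¹) * a y with hG2def
    have hcG2 : Continuous G2 := ((continuous_const.mul hcR).add
      (continuous_const.mul hcR1)).add (continuous_const.mul hca)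
    have hder_eq : L2sq (deriv P1) = L2sq G2 := by
      rw [hderivP1]
      apply L2sq_congr
      apply eqOn_Icc_of_Ioo (hcψ2.add (continuous_const.mul hcψ1)) hcG2
      intro y hy
      have h1 := heqn y hy
      have h2 : (ψ2 y - (k:ℂ)^2 * ψ y) = -w y := h1
      show ψ2 y + Complex.I * ((ξ:ℝ):ℂ) * ψ1 y = ((k:ℂ)^2) * R y
        + (Complex.I * ((ξ:ℝ):ℂ)) * R1 y + (Complex.I * ((ξ:ℝ):ℂ) * (((κ:ℝ):ℂ))⁻¹) * a y
      simp only [hRdef, hR1def, hadef]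
      field_simp
      linear_combination ((κ:ℝ):ℂ) * h2 - w y * hκc' - ((ξ:ℝ):ℂ)^2 * w y * Complex.I_sq
    have hG2s : s * nn G2 ≤ 25 * Nr := by
      have h1 : nn G2 ≤ nn (fun y => ((k:ℂ)^2) * R y)
          + nn (fun y => (Complex.I * ((ξ:ℝ):ℂ)) * R1 y)
          + nn (fun y => (Complex.I * ((ξ:ℝ):ℂ) * (((κ:ℝ):ℂ))⁻¹) * a y) := by
        rw [hG2def]
        exact nn_three _ _ _ (continuous_const.mul hcR) (continuous_const.mul hcR1)
          (continuous_const.mul hca)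
      have e6 : ‖Complex.I * ((ξ:ℝ):ℂ) * (((κ:ℝ):ℂ))⁻¹‖ = s * κ⁻¹ := by
        rw [norm_mul, hnormIξ, hnormκinv]
      rw [nn_const_mul, nn_const_mul, nn_const_mul, hnormIξ, hnormk2, e6] at h1
      have t4 : s * (k^2 * nn R) ≤ 16 * Nr := by
        nlinarith [hRbd, mul_nonneg (by linarith [hsκ] : (0:ℝ) ≤ κ - s^2) (nn_nonneg R),
          mul_nonneg (mul_nonneg hspos.le (by linarith : (0:ℝ) ≤ s - 1)) (nn_nonneg R),
          mul_nonneg (mul_nonneg hspos.le (by linarith [hk2le] : (0:ℝ) ≤ 1 - k^2)) (nn_nonneg R),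
          mul_nonneg hspos.le (nn_nonneg R)]
      have t5 : s * (s * nn R1) ≤ 8 * Nr := by
        nlinarith [hR1bd, mul_nonneg (by linarith [hsκ] : (0:ℝ) ≤ κ - s^2) (nn_nonneg R1)]
      have t6 : s * ((s*κ⁻¹) * nn a) ≤ Nr := by
        have e4 : s * ((s*κ⁻¹) * nn a) = (s^2/κ) * nn a := by ring
        rw [e4]
        have e5 : s^2/κ ≤ 1 := by
          rw [div_le_one hκpos]
          exact hsκ
        calc (s^2/κ) * nn a ≤ 1 * nn a := mul_le_mul_of_nonneg_right e5 (nn_nonneg a)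
          _ = nn a := one_mul _
          _ ≤ Nr := ha_le
      calc s * nn G2 ≤ s * (k^2 * nn R + s * nn R1 + s*κ⁻¹ * nn a) :=
            mul_le_mul_of_nonneg_left h1 hspos.le
        _ = s*(k^2*nn R) + s*(s*nn R1) + s*((s*κ⁻¹)*nn a) := by ring
        _ ≤ 16*Nr + 8*Nr + Nr := by linarith [t4, t5, t6]
        _ = 25*Nr := by ring
    -- conclusion
    set q : ℝ := Nr / s with hqdef
    have hq0 : 0 ≤ q := div_nonneg hNr0 hspos.le
    have hP1q : nn P1 ≤ 25 * q := by
      rw [hqdef, mul_div_assoc']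
      rw [le_div_iff₀ hspos]
      nlinarith [hP1s]
    have hG2q : nn G2 ≤ 25 * q := by
      rw [hqdef, mul_div_assoc']
      rw [le_div_iff₀ hspos]
      nlinarith [hG2s]
    have hsum : L2sq (deriv P1) + L2sq P1 ≤ (36*q)^2 := by
      rw [hder_eq, ← nn_sq, ← nn_sq]
      nlinarith [hP1q, hG2q, nn_nonneg P1, nn_nonneg G2, hq0]
    have h36 : Real.sqrt (L2sq (deriv P1) + L2sq P1) ≤ 36*q := by
      have h := Real.sqrt_le_sqrt hsum
      rwa [Real.sqrt_sq (by positivity)] at h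
    have hrhs : 36*q ≤ 100 * (1+s)⁻¹ * Nr := by
      rw [hqdef, mul_div_assoc']
      have hrw : 100 * (1+s)⁻¹ * Nr = (100*Nr)/(1+s) := by
        rw [div_eq_mul_inv]
        ring
      rw [hrw, div_le_div_iff₀ hspos (by linarith : (0:ℝ) < 1+s)]
      nlinarith [hNr0, hsge]
    exact le_trans h36 hrhs
end

section
/- There is a universal constant C > 0 such that: for every k ∈ ℝ with 0 < |k| ≤ 1, every t ≥ 0, and all functions ψ, w : [−1,1] → ℂ with ψ twice continuously differentiable, w twice continuously differentiable, ψ(±1) = 0, w(±1) = 0, and ψ''(y) − k² ψ(y) = −w(y) on (−1,1), one has ‖ψ‖_{L²} ≤ C (1 + |k t|)^{−2} ( ‖(e_{k,t} w)''‖²_{L²} + ‖(e_{k,t} w)'‖²_{L²} + ‖w‖²_{L²} )^{1/2}, where e_{k,t}(y) = e^{i k y t} and derivatives of e_{k,t} w are taken in y. -/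
open Set

open MeasureTheory intervalIntegral Complex

lemma hasDerivAt_primitive (f : ℝ → ℂ) (hf : Continuous f) (a y : ℝ) :
    HasDerivAt (fun x => ∫ z in a..x, f z) (f y) y :=
  intervalIntegral.integral_hasDerivAt_right (hf.intervalIntegrable a y)
    (hf.stronglyMeasurableAtFilter _ _) hf.continuousAt

noncomputable def chiI (ψ : ℝ → ℂ) (x : ℝ) : ℂ := ∫ z in (-1:ℝ)..x, (1 + (z:ℂ)) * ψ z
noncomputable def chiJ (ψ : ℝ → ℂ) (x : ℝ) : ℂ := ∫ z in (-1:ℝ)..x, (1 - (z:ℂ)) * ψ z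
noncomputable def chi (ψ : ℝ → ℂ) (x : ℝ) : ℂ :=
  ((1 - (x:ℂ))/2) * chiI ψ x + ((1 + (x:ℂ))/2) * (chiJ ψ 1 - chiJ ψ x)
noncomputable def chi1 (ψ : ℝ → ℂ) (x : ℝ) : ℂ :=
  (-(1:ℂ)/2) * chiI ψ x + ((1:ℂ)/2) * (chiJ ψ 1 - chiJ ψ x)

variable {ψ : ℝ → ℂ}

lemma contI (hc : Continuous ψ) : Continuous fun z : ℝ => (1 + (z:ℂ)) * ψ z :=
  (continuous_const.add Complex.continuous_ofReal).mul hc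

lemma contJ (hc : Continuous ψ) : Continuous fun z : ℝ => (1 - (z:ℂ)) * ψ z :=
  (continuous_const.sub Complex.continuous_ofReal).mul hc

lemma chiI_deriv (hc : Continuous ψ) (y : ℝ) : HasDerivAt (chiI ψ) ((1 + (y:ℂ)) * ψ y) y :=
  hasDerivAt_primitive _ (contI hc) _ y

lemma chiJ_deriv (hc : Continuous ψ) (y : ℝ) : HasDerivAt (chiJ ψ) ((1 - (y:ℂ)) * ψ y) y :=
  hasDerivAt_primitive _ (contJ hc) _ y

lemma coe_deriv (y : ℝ) : HasDerivAt (fun x : ℝ => (x:ℂ)) 1 y := by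
  exact Complex.ofRealCLM.hasDerivAt (x := y)

lemma chi_deriv (hc : Continuous ψ) (y : ℝ) : HasDerivAt (chi ψ) (chi1 ψ y) y := by
  have h1 : HasDerivAt (fun x : ℝ => ((1 - (x:ℂ))/2)) (-(1/2) : ℂ) y := by
    have := ((coe_deriv y).const_sub 1).div_const 2
    exact this.congr_deriv (by norm_num)
  have h2 : HasDerivAt (fun x : ℝ => ((1 + (x:ℂ))/2)) (1/2 : ℂ) y :=
    ((coe_deriv y).const_add 1).div_const 2
  have h3 : HasDerivAt (fun x => chiJ ψ 1 - chiJ ψ x) (-((1 - (y:ℂ)) * ψ y)) y :=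
    (chiJ_deriv hc y).const_sub _
  have h4 := (h1.mul (chiI_deriv hc y)).add (h2.mul h3)
  have : HasDerivAt (chi ψ) (-(1/2) * chiI ψ y + (1 - ↑y)/2 * ((1 + ↑y) * ψ y)
      + (1/2 * (chiJ ψ 1 - chiJ ψ y) + (1 + ↑y)/2 * -((1 - ↑y) * ψ y))) y := h4
  convert this using 1
  unfold chi1; ring

lemma chi1_deriv (hc : Continuous ψ) (y : ℝ) : HasDerivAt (chi1 ψ) (-ψ y) y := by
  have h3 : HasDerivAt (fun x => chiJ ψ 1 - chiJ ψ x) (-((1 - (y:ℂ)) * ψ y)) y :=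
    (chiJ_deriv hc y).const_sub _
  have h4 := ((chiI_deriv hc y).const_mul (-(1:ℂ)/2)).add (h3.const_mul ((1:ℂ)/2))
  have : HasDerivAt (chi1 ψ) (-(1:ℂ)/2 * ((1 + ↑y) * ψ y) + (1:ℂ)/2 * -((1 - ↑y) * ψ y)) y := h4
  convert this using 1
  ring

lemma chi_cont (hc : Continuous ψ) : Continuous (chi ψ) :=
  (Differentiable.continuous fun y => (chi_deriv hc y).differentiableAt : _)

lemma chi1_cont (hc : Continuous ψ) : Continuous (chi1 ψ) :=
  (Differentiable.continuous fun y => (chi1_deriv hc y).differentiableAt : _)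

lemma chi_bm : chi ψ (-1) = 0 := by
  unfold chi chiI
  norm_num

lemma chi_bp : chi ψ 1 = 0 := by
  unfold chi
  norm_num

lemma tail_nonneg (hc : Continuous ψ) {y : ℝ} (hy1 : y ≤ 1) (g : ℝ → ℝ) (hg : Continuous g)
    (hg0 : ∀ z, 0 ≤ g z) {a : ℝ} (ha : a ≤ y) :
    (∫ z in a..y, g z) ≤ ∫ z in a..1, g z := by
  have hsplit := intervalIntegral.integral_add_adjacent_intervals (μ := volume)
    (hg.intervalIntegrable a y) (hg.intervalIntegrable y 1)
  have h2 : 0 ≤ ∫ z in y..1, g z :=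
    intervalIntegral.integral_nonneg hy1 (fun z _ => hg0 z)
  linarith [hsplit]

lemma chiI_bound (hc : Continuous ψ) {y : ℝ} (hy : y ∈ Icc (-1:ℝ) 1) :
    ‖chiI ψ y‖ ≤ 2 * ∫ z in (-1:ℝ)..1, ‖ψ z‖ := by
  have h1 : ‖chiI ψ y‖ ≤ ∫ z in (-1:ℝ)..y, ‖(1 + (z:ℂ)) * ψ z‖ :=
    intervalIntegral.norm_integral_le_integral_norm hy.1
  have h2 : (∫ z in (-1:ℝ)..y, ‖(1 + (z:ℂ)) * ψ z‖) ≤ ∫ z in (-1:ℝ)..y, 2 * ‖ψ z‖ := by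
    apply intervalIntegral.integral_mono_on hy.1
      ((contI hc).norm.intervalIntegrable _ _)
      (((continuous_const.mul hc.norm : Continuous fun z => 2*‖ψ z‖)).intervalIntegrable _ _)
    intro z hz
    have hz2 : |1 + z| ≤ 2 := by
      rw [abs_le]; constructor <;> nlinarith [hz.1, hz.2, hy.2]
    calc ‖(1 + (z:ℂ)) * ψ z‖ = ‖(1 + (z:ℂ))‖ * ‖ψ z‖ := norm_mul _ _
      _ ≤ 2 * ‖ψ z‖ := by
          apply mul_le_mul_of_nonneg_right _ (norm_nonneg _)
          have : (1 + (z:ℂ)) = ((1 + z : ℝ) : ℂ) := by push_cast; ring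
          rw [this, Complex.norm_real, Real.norm_eq_abs]; exact hz2
  have h3 : (∫ z in (-1:ℝ)..y, 2 * ‖ψ z‖) ≤ ∫ z in (-1:ℝ)..1, 2 * ‖ψ z‖ :=
    tail_nonneg hc hy.2 (fun z => 2*‖ψ z‖) ((continuous_const.mul hc.norm : Continuous fun z => 2*‖ψ z‖)) (fun z => by positivity) hy.1
  simp only [intervalIntegral.integral_const_mul] at h2 h3
  linarith

lemma chiJtail_eq (hc : Continuous ψ) (y : ℝ) :
    chiJ ψ 1 - chiJ ψ y = ∫ z in y..(1:ℝ), (1 - (z:ℂ)) * ψ z := by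
  have hsplit := intervalIntegral.integral_add_adjacent_intervals (μ := volume)
    ((contJ hc).intervalIntegrable (-1) y) ((contJ hc).intervalIntegrable y 1)
  unfold chiJ
  rw [← hsplit]; ring

lemma chiJtail_bound (hc : Continuous ψ) {y : ℝ} (hy : y ∈ Icc (-1:ℝ) 1) :
    ‖chiJ ψ 1 - chiJ ψ y‖ ≤ 2 * ∫ z in (-1:ℝ)..1, ‖ψ z‖ := by
  rw [chiJtail_eq hc y]
  have h1 : ‖∫ z in y..(1:ℝ), (1 - (z:ℂ)) * ψ z‖ ≤ ∫ z in y..(1:ℝ), ‖(1 - (z:ℂ)) * ψ z‖ :=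
    intervalIntegral.norm_integral_le_integral_norm hy.2
  have h2 : (∫ z in y..(1:ℝ), ‖(1 - (z:ℂ)) * ψ z‖) ≤ ∫ z in y..(1:ℝ), 2 * ‖ψ z‖ := by
    apply intervalIntegral.integral_mono_on hy.2
      ((contJ hc).norm.intervalIntegrable _ _)
      (((continuous_const.mul hc.norm : Continuous fun z => 2*‖ψ z‖)).intervalIntegrable _ _)
    intro z hz
    have hz2 : |1 - z| ≤ 2 := by
      rw [abs_le]; constructor <;> nlinarith [hz.1, hz.2, hy.1]
    calc ‖(1 - (z:ℂ)) * ψ z‖ = ‖(1 - (z:ℂ))‖ * ‖ψ z‖ := norm_mul _ _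
      _ ≤ 2 * ‖ψ z‖ := by
          apply mul_le_mul_of_nonneg_right _ (norm_nonneg _)
          have : (1 - (z:ℂ)) = ((1 - z : ℝ) : ℂ) := by push_cast; ring
          rw [this, Complex.norm_real, Real.norm_eq_abs]; exact hz2
  have h3 : (∫ z in y..(1:ℝ), 2 * ‖ψ z‖) ≤ ∫ z in (-1:ℝ)..1, 2 * ‖ψ z‖ := by
    have hsplit := intervalIntegral.integral_add_adjacent_intervals (μ := volume)
      (((continuous_const.mul hc.norm : Continuous fun z => 2*‖ψ z‖)).intervalIntegrable (-1) y) (((continuous_const.mul hc.norm : Continuous fun z => 2*‖ψ z‖)).intervalIntegrable y 1)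
    have h4 : 0 ≤ ∫ z in (-1:ℝ)..y, 2 * ‖ψ z‖ :=
      intervalIntegral.integral_nonneg hy.1 (fun z _ => by positivity)
    simp only [Pi.mul_apply] at hsplit
    linarith
  simp only [intervalIntegral.integral_const_mul] at h2 h3
  linarith

lemma chi_bound (hc : Continuous ψ) {y : ℝ} (hy : y ∈ Icc (-1:ℝ) 1) :
    ‖chi ψ y‖ ≤ 4 * ∫ z in (-1:ℝ)..1, ‖ψ z‖ := by
  set M := ∫ z in (-1:ℝ)..1, ‖ψ z‖ with hM
  have hM0 : 0 ≤ M := intervalIntegral.integral_nonneg (by norm_num) (fun z _ => norm_nonneg _)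
  have hc1 : ‖((1 - (y:ℂ))/2)‖ ≤ 1 := by
    have : (1 - (y:ℂ))/2 = (((1 - y)/2 : ℝ) : ℂ) := by push_cast; ring
    rw [this, Complex.norm_real, Real.norm_eq_abs, abs_le]
    constructor <;> nlinarith [hy.1, hy.2]
  have hc2 : ‖((1 + (y:ℂ))/2)‖ ≤ 1 := by
    have : (1 + (y:ℂ))/2 = (((1 + y)/2 : ℝ) : ℂ) := by push_cast; ring
    rw [this, Complex.norm_real, Real.norm_eq_abs, abs_le]
    constructor <;> nlinarith [hy.1, hy.2]
  calc ‖chi ψ y‖ ≤ ‖((1 - (y:ℂ))/2) * chiI ψ y‖ + ‖((1 + (y:ℂ))/2) * (chiJ ψ 1 - chiJ ψ y)‖ :=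
        norm_add_le _ _
    _ = ‖((1 - (y:ℂ))/2)‖ * ‖chiI ψ y‖ + ‖((1 + (y:ℂ))/2)‖ * ‖chiJ ψ 1 - chiJ ψ y‖ := by
        rw [norm_mul, norm_mul]
    _ ≤ 1 * (2*M) + 1 * (2*M) := by
        gcongr
        · exact chiI_bound hc hy
        · exact chiJtail_bound hc hy
    _ = 4 * M := by ring

lemma chi1_bound (hc : Continuous ψ) {y : ℝ} (hy : y ∈ Icc (-1:ℝ) 1) :
    ‖chi1 ψ y‖ ≤ 2 * ∫ z in (-1:ℝ)..1, ‖ψ z‖ := by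
  set M := ∫ z in (-1:ℝ)..1, ‖ψ z‖ with hM
  have hM0 : 0 ≤ M := intervalIntegral.integral_nonneg (by norm_num) (fun z _ => norm_nonneg _)
  calc ‖chi1 ψ y‖ ≤ ‖(-(1:ℂ)/2) * chiI ψ y‖ + ‖((1:ℂ)/2) * (chiJ ψ 1 - chiJ ψ y)‖ :=
        norm_add_le _ _
    _ = (1/2) * ‖chiI ψ y‖ + (1/2) * ‖chiJ ψ 1 - chiJ ψ y‖ := by
        rw [norm_mul, norm_mul]; norm_num
    _ ≤ (1/2) * (2*M) + (1/2) * (2*M) := by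
        gcongr
        · exact chiI_bound hc hy
        · exact chiJtail_bound hc hy
    _ = 2 * M := by ring

lemma L2sq_nonneg (h : ℝ → ℂ) : 0 ≤ L2sq h :=
  intervalIntegral.integral_nonneg (by norm_num) (fun _ _ => by positivity)

lemma cs_lemma (f g : ℝ → ℂ) (hf : Continuous f) (hg : Continuous g) :
    (∫ y in (-1:ℝ)..1, ‖f y‖ * ‖g y‖) ≤ Real.sqrt (L2sq f) * Real.sqrt (L2sq g) := by
  set P := L2sq f with hP
  set Q := L2sq g with hQ
  set R := ∫ y in (-1:ℝ)..1, ‖f y‖ * ‖g y‖ with hR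
  have hfi : IntervalIntegrable (fun y => ‖f y‖^2) volume (-1) 1 :=
    (hf.norm.pow 2).intervalIntegrable _ _
  have hgi : IntervalIntegrable (fun y => ‖g y‖^2) volume (-1) 1 :=
    (hg.norm.pow 2).intervalIntegrable _ _
  have hfgi : IntervalIntegrable (fun y => ‖f y‖ * ‖g y‖) volume (-1) 1 :=
    (hf.norm.mul hg.norm).intervalIntegrable _ _
  have hR0 : 0 ≤ R := intervalIntegral.integral_nonneg (by norm_num) (fun _ _ => by positivity)
  have hP0 : 0 ≤ P := L2sq_nonneg f
  have hQ0 : 0 ≤ Q := L2sq_nonneg g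
  have key : ∀ l : ℝ, 0 ≤ P - 2*l*R + l^2*Q := by
    intro l
    have h0 : 0 ≤ ∫ y in (-1:ℝ)..1, (‖f y‖ - l*‖g y‖)^2 :=
      intervalIntegral.integral_nonneg (by norm_num) (fun _ _ => by positivity)
    have hexp : (∫ y in (-1:ℝ)..1, (‖f y‖ - l*‖g y‖)^2)
        = P - 2*l*R + l^2*Q := by
      have : ∀ y : ℝ, (‖f y‖ - l*‖g y‖)^2
          = ‖f y‖^2 - (2*l)*(‖f y‖*‖g y‖) + l^2*‖g y‖^2 := by intro y; ring
      rw [intervalIntegral.integral_congr (fun y _ => this y)]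
      rw [intervalIntegral.integral_add (hfi.sub (hfgi.const_mul _)) (hgi.const_mul _),
        intervalIntegral.integral_sub hfi (hfgi.const_mul _),
        intervalIntegral.integral_const_mul, intervalIntegral.integral_const_mul]
      rfl
    linarith [hexp ▸ h0]
  have hRPQ : R^2 ≤ P * Q := by
    rcases eq_or_lt_of_le hQ0 with hQz | hQpos
    · have hRz : R = 0 := by
        by_contra hRne
        have hRpos : 0 < R := lt_of_le_of_ne hR0 (Ne.symm hRne)
        have := key ((P+1)/(2*R))
        rw [← hQz] at this
        have h2 : 2*((P+1)/(2*R))*R = P+1 := by field_simp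
        nlinarith
      nlinarith
    · have := key (R/Q)
      have h2 : 2*(R/Q)*R = 2*R^2/Q := by ring
      have h3 : (R/Q)^2*Q = R^2/Q := by field_simp
      rw [h2, h3] at this
      rw [show 2*R^2/Q = 2*(R^2/Q) by ring] at this
      have h4 : R^2/Q ≤ P := by linarith
      calc R^2 = R^2/Q*Q := by field_simp
        _ ≤ P*Q := mul_le_mul_of_nonneg_right h4 hQ0
  calc R = Real.sqrt (R^2) := (Real.sqrt_sq hR0).symm
    _ ≤ Real.sqrt (P*Q) := Real.sqrt_le_sqrt hRPQ
    _ = Real.sqrt P * Real.sqrt Q := Real.sqrt_mul hP0 _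

lemma ibp_zero (F F' : ℝ → ℂ) (hd : ∀ y, HasDerivAt F (F' y) y) (hF' : Continuous F')
    (hm : F (-1) = 0) (hp : F 1 = 0) : (∫ y in (-1:ℝ)..1, F' y) = 0 := by
  rw [intervalIntegral.integral_eq_sub_of_hasDerivAt (fun y _ => hd y)
    (hF'.intervalIntegrable _ _), hp, hm, sub_zero]

lemma integral_mul_star_self (f : ℝ → ℂ) :
    (∫ y in (-1:ℝ)..1, f y * star (f y)) = ((L2sq f : ℝ) : ℂ) := by
  have h : ∀ y : ℝ, f y * star (f y) = ((‖f y‖^2 : ℝ) : ℂ) := by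
    intro y
    rw [show star (f y) = (starRingEnd ℂ) (f y) from rfl, Complex.mul_conj,
      Complex.normSq_eq_norm_sq]
  simp_rw [h]
  exact intervalIntegral.integral_ofReal

set_option maxHeartbeats 1000000

/-- Low-frequency inviscid damping estimate:
`‖ψ‖ ≤ C (1+|kt|)^{-2} ‖(∂_y,1)²(e^{ikyt}w)‖` for `0 < |k| ≤ 1`. -/
theorem psi_lowfreq_second :
    ∃ C > (0 : ℝ), ∀ (k t : ℝ) (ψ w : ℝ → ℂ),
      k ≠ 0 → |k| ≤ 1 → 0 ≤ t →
      ContDiff ℝ 2 ψ → ContDiff ℝ 2 w →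
      ψ (-1) = 0 → ψ 1 = 0 → w (-1) = 0 → w 1 = 0 →
      (∀ y ∈ Ioo (-1 : ℝ) 1, deriv (deriv ψ) y - (k : ℂ) ^ 2 * ψ y = -w y) →
      Real.sqrt (L2sq ψ)
        ≤ C * ((1 + |k * t|) ^ 2)⁻¹ * Real.sqrt
            (L2sq (deriv (deriv (ew k t w))) + L2sq (deriv (ew k t w)) + L2sq w) := by
  refine ⟨100, by norm_num, ?_⟩
  intro k t ψ w hk hk1 ht hψ2 hw2 hψm hψp hwm hwp heq
  -- shorthand for integrability
  have hInt : ∀ (f : ℝ → ℂ), Continuous f → IntervalIntegrable f volume (-1) 1 :=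
    fun f hf => hf.intervalIntegrable _ _
  -- smoothness of ψ
  have hψsplit : Differentiable ℝ ψ ∧ Differentiable ℝ (deriv ψ) ∧
      Continuous (deriv (deriv ψ)) := by
    have h2 : ContDiff ℝ (1+1) ψ := by norm_num at hψ2 ⊢; exact hψ2
    rw [contDiff_succ_iff_deriv] at h2
    obtain ⟨hd, -, h1⟩ := h2
    rw [contDiff_one_iff_deriv] at h1
    exact ⟨hd, h1.1, h1.2⟩
  obtain ⟨hψdiff, hψ'diff, hψ''c⟩ := hψsplit
  have hψc : Continuous ψ := hψdiff.continuous
  have hψ'c : Continuous (deriv ψ) := hψ'diff.continuous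
  have hψat : ∀ y, HasDerivAt ψ (deriv ψ y) y := fun y => (hψdiff y).hasDerivAt
  have hψ'at : ∀ y, HasDerivAt (deriv ψ) (deriv (deriv ψ) y) y := fun y => (hψ'diff y).hasDerivAt
  -- φ
  set φ := ew k t w with hφdef
  have hφ2 : ContDiff ℝ 2 φ := by
    rw [hφdef]; unfold ew
    refine ContDiff.mul ?_ hw2
    have h0 : ContDiff ℝ 2 (fun y:ℝ => (y:ℂ)) := by
      exact Complex.ofRealCLM.contDiff
    exact Complex.contDiff_exp.comp ((contDiff_const.mul h0).mul contDiff_const)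
  have hφsplit : Differentiable ℝ φ ∧ Differentiable ℝ (deriv φ) ∧
      Continuous (deriv (deriv φ)) := by
    have h2 : ContDiff ℝ (1+1) φ := by norm_num at hφ2 ⊢; exact hφ2
    rw [contDiff_succ_iff_deriv] at h2
    obtain ⟨hd, -, h1⟩ := h2
    rw [contDiff_one_iff_deriv] at h1
    exact ⟨hd, h1.1, h1.2⟩
  obtain ⟨hφdiff, hφ'diff, hφ''c⟩ := hφsplit
  have hφc : Continuous φ := hφdiff.continuous
  have hφ'c : Continuous (deriv φ) := hφ'diff.continuous
  have hφat : ∀ y, HasDerivAt φ (deriv φ y) y := fun y => (hφdiff y).hasDerivAt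
  have hφ'at : ∀ y, HasDerivAt (deriv φ) (deriv (deriv φ) y) y := fun y => (hφ'diff y).hasDerivAt
  have hwc : Continuous w := hw2.continuous
  have hφm : φ (-1) = 0 := by rw [hφdef]; unfold ew; rw [hwm, mul_zero]
  have hφp : φ 1 = 0 := by rw [hφdef]; unfold ew; rw [hwp, mul_zero]
  have hφnorm : ∀ y : ℝ, ‖φ y‖ = ‖w y‖ := by
    intro y
    rw [hφdef]; unfold ew
    rw [norm_mul, Complex.norm_exp]
    simp [Complex.mul_re, Complex.mul_im]
  -- chi facts
  have hχc : Continuous (chi ψ) := chi_cont hψc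
  have hχ₁c : Continuous (chi1 ψ) := chi1_cont hψc
  have hχsc : Continuous (fun y => star (chi ψ y)) := hχc.star
  have hχ₁sc : Continuous (fun y => star (chi1 ψ y)) := hχ₁c.star
  -- the three integration by parts identities
  have hu1 : (∫ y in (-1:ℝ)..1,
      (deriv (deriv ψ) y * star (chi ψ y) + deriv ψ y * star (chi1 ψ y))) = 0 := by
    apply ibp_zero (fun y => deriv ψ y * star (chi ψ y))
    · intro y; exact (hψ'at y).mul ((chi_deriv hψc y).star)
    · exact (hψ''c.mul hχsc).add (hψ'c.mul hχ₁sc)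
    · rw [chi_bm]; simp
    · rw [chi_bp]; simp
  have hu2 : (∫ y in (-1:ℝ)..1,
      (deriv ψ y * star (chi1 ψ y) + ψ y * star (-ψ y))) = 0 := by
    apply ibp_zero (fun y => ψ y * star (chi1 ψ y))
    · intro y; exact (hψat y).mul ((chi1_deriv hψc y).star)
    · refine (hψ'c.mul hχ₁sc).add (hψc.mul ?_)
      exact (hψc.neg).star
    · rw [hψm]; simp
    · rw [hψp]; simp
  have hu3 : (∫ y in (-1:ℝ)..1,
      (-ψ y * star (chi ψ y) + chi1 ψ y * star (chi1 ψ y))) = 0 := by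
    apply ibp_zero (fun y => chi1 ψ y * star (chi ψ y))
    · intro y; exact (chi1_deriv hψc y).mul ((chi_deriv hψc y).star)
    · exact ((hψc.neg).mul hχsc).add (hχ₁c.mul hχ₁sc)
    · rw [chi_bm]; simp
    · rw [chi_bp]; simp
  -- extract the values
  have hP2 : (∫ y in (-1:ℝ)..1, deriv ψ y * star (chi1 ψ y)) = ((L2sq ψ : ℝ) : ℂ) := by
    simp only [star_neg, mul_neg, ← sub_eq_add_neg] at hu2
    rw [intervalIntegral.integral_sub (hInt (fun y => deriv ψ y * star (chi1 ψ y)) (hψ'c.mul hχ₁sc))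
      (hInt (fun y => ψ y * star (ψ y)) (hψc.mul (hψc.star)))] at hu2
    rw [sub_eq_zero.mp hu2, integral_mul_star_self]
  have hP1 : (∫ y in (-1:ℝ)..1, deriv (deriv ψ) y * star (chi ψ y)) = -((L2sq ψ : ℝ) : ℂ) := by
    rw [intervalIntegral.integral_add (hInt (fun y => deriv (deriv ψ) y * star (chi ψ y)) (hψ''c.mul hχsc))
      (hInt (fun y => deriv ψ y * star (chi1 ψ y)) (hψ'c.mul hχ₁sc))] at hu1
    rw [eq_neg_of_add_eq_zero_left hu1, hP2]
  have hP4 : (∫ y in (-1:ℝ)..1, ψ y * star (chi ψ y)) = ((L2sq (chi1 ψ) : ℝ) : ℂ) := by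
    simp only [neg_mul] at hu3
    rw [intervalIntegral.integral_add (hInt (fun y => -(ψ y * star (chi ψ y))) ((hψc.mul hχsc).neg))
      (hInt (fun y => chi1 ψ y * star (chi1 ψ y)) (hχ₁c.mul hχ₁sc)), intervalIntegral.integral_neg] at hu3
    rw [neg_add_eq_zero.mp hu3, integral_mul_star_self]
  -- the master identity
  have hae1 : ∀ᵐ (y:ℝ), y ≠ (1:ℝ) := by
    refine MeasureTheory.ae_iff.mpr ?_
    simp [Set.setOf_eq_eq_singleton]
  have hPw1 : (∫ y in (-1:ℝ)..1, w y * star (chi ψ y))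
      = ∫ y in (-1:ℝ)..1, ((k:ℂ)^2 * ψ y - deriv (deriv ψ) y) * star (chi ψ y) := by
    apply intervalIntegral.integral_congr_ae
    filter_upwards [hae1] with y hy hymem
    rw [Set.uIoc_of_le (by norm_num : (-1:ℝ) ≤ 1)] at hymem
    have hyo : y ∈ Ioo (-1:ℝ) 1 := ⟨hymem.1, lt_of_le_of_ne hymem.2 hy⟩
    have h := heq y hyo
    have hw' : w y = (k:ℂ)^2 * ψ y - deriv (deriv ψ) y := by linear_combination h
    rw [hw']
  have hPw : (∫ y in (-1:ℝ)..1, w y * star (chi ψ y))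
      = ((k^2 * L2sq (chi1 ψ) + L2sq ψ : ℝ) : ℂ) := by
    rw [hPw1]
    have hsplit : (∫ y in (-1:ℝ)..1, ((k:ℂ)^2 * ψ y - deriv (deriv ψ) y) * star (chi ψ y))
        = (k:ℂ)^2 * (∫ y in (-1:ℝ)..1, ψ y * star (chi ψ y))
          - ∫ y in (-1:ℝ)..1, deriv (deriv ψ) y * star (chi ψ y) := by
      rw [← intervalIntegral.integral_const_mul, ← intervalIntegral.integral_sub
        ((hInt (fun y => ψ y * star (chi ψ y)) (hψc.mul hχsc)).const_mul _) (hInt (fun y => deriv (deriv ψ) y * star (chi ψ y)) (hψ''c.mul hχsc))]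
      apply intervalIntegral.integral_congr
      intro y _; ring
    rw [hsplit, hP4, hP1]
    push_cast
    ring
  -- basic quantities
  set nψ := Real.sqrt (L2sq ψ) with hnψ
  set A := Real.sqrt (L2sq (deriv (deriv φ))) with hA
  set B := Real.sqrt (L2sq (deriv φ)) with hB
  set W := Real.sqrt (L2sq w) with hW
  set S := Real.sqrt (L2sq (deriv (deriv φ)) + L2sq (deriv φ) + L2sq w) with hS
  have hnψ0 : 0 ≤ nψ := Real.sqrt_nonneg _
  have hA0 : 0 ≤ A := Real.sqrt_nonneg _
  have hB0 : 0 ≤ B := Real.sqrt_nonneg _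
  have hW0 : 0 ≤ W := Real.sqrt_nonneg _
  have hS0 : 0 ≤ S := Real.sqrt_nonneg _
  have hnψsq : nψ^2 = L2sq ψ := Real.sq_sqrt (L2sq_nonneg ψ)
  have hAsq : A^2 = L2sq (deriv (deriv φ)) := Real.sq_sqrt (L2sq_nonneg _)
  have hBsq : B^2 = L2sq (deriv φ) := Real.sq_sqrt (L2sq_nonneg _)
  have hWsq : W^2 = L2sq w := Real.sq_sqrt (L2sq_nonneg _)
  have hSsq : S^2 = A^2 + B^2 + W^2 := by
    rw [hAsq, hBsq, hWsq, hS]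
    exact Real.sq_sqrt (by
      have h1 := L2sq_nonneg (deriv (deriv φ)); have h2 := L2sq_nonneg (deriv φ)
      have h3 := L2sq_nonneg w; linarith)
  set M := ∫ z in (-1:ℝ)..1, ‖ψ z‖ with hM
  have hM0 : 0 ≤ M := intervalIntegral.integral_nonneg (by norm_num) (fun z _ => norm_nonneg _)
  have hMle : M ≤ nψ * Real.sqrt 2 := by
    have h := cs_lemma ψ (fun _ => (1:ℂ)) hψc continuous_const
    have hL1 : L2sq (fun _ : ℝ => (1:ℂ)) = 2 := by
      unfold L2sq; norm_num
    rw [hL1] at h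
    simp only [norm_one, mul_one] at h
    exact h
  have hM2 : M^2 ≤ 2 * L2sq ψ := by
    have h2 : (nψ*Real.sqrt 2)^2 = 2*L2sq ψ := by
      rw [mul_pow, Real.sq_sqrt (by norm_num : (0:ℝ) ≤ 2), hnψsq]; ring
    nlinarith [hMle, hM0, h2, hnψ0, Real.sqrt_nonneg 2]
  have hχL2 : L2sq (chi ψ) ≤ 64 * L2sq ψ := by
    have hmono : L2sq (chi ψ) ≤ ∫ _ in (-1:ℝ)..1, (4*M)^2 := by
      unfold L2sq
      apply intervalIntegral.integral_mono_on (by norm_num)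
        ((hχc.norm.pow 2).intervalIntegrable _ _) intervalIntegrable_const
      intro y hy
      have h := chi_bound hψc hy
      rw [← hM] at h
      show ‖chi ψ y‖^2 ≤ (4*M)^2
      nlinarith [norm_nonneg (chi ψ y)]
    have hconst : (∫ _ in (-1:ℝ)..1, (4*M)^2) = 2*(4*M)^2 := by
      rw [intervalIntegral.integral_const]; norm_num
    nlinarith [hM2]
  have hχs : Real.sqrt (L2sq (chi ψ)) ≤ 8 * nψ := by
    have h := Real.sqrt_le_sqrt hχL2
    rwa [show (64:ℝ) * L2sq ψ = (8*nψ)^2 by rw [mul_pow, hnψsq]; norm_num,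
      Real.sqrt_sq (by positivity)] at h
  have hχ₁L2 : L2sq (chi1 ψ) ≤ 16 * L2sq ψ := by
    have hmono : L2sq (chi1 ψ) ≤ ∫ _ in (-1:ℝ)..1, (2*M)^2 := by
      unfold L2sq
      apply intervalIntegral.integral_mono_on (by norm_num)
        ((hχ₁c.norm.pow 2).intervalIntegrable _ _) intervalIntegrable_const
      intro y hy
      have h := chi1_bound hψc hy
      rw [← hM] at h
      show ‖chi1 ψ y‖^2 ≤ (2*M)^2
      nlinarith [norm_nonneg (chi1 ψ y)]
    have hconst : (∫ _ in (-1:ℝ)..1, (2*M)^2) = 2*(2*M)^2 := by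
      rw [intervalIntegral.integral_const]; norm_num
    nlinarith [hM2]
  have hχ₁s : Real.sqrt (L2sq (chi1 ψ)) ≤ 4 * nψ := by
    have h := Real.sqrt_le_sqrt hχ₁L2
    rwa [show (16:ℝ) * L2sq ψ = (4*nψ)^2 by rw [mul_pow, hnψsq]; norm_num,
      Real.sqrt_sq (by positivity)] at h
  -- lower bound for the pairing
  have hlow : L2sq ψ ≤ ‖∫ y in (-1:ℝ)..1, w y * star (chi ψ y)‖ := by
    rw [hPw, Complex.norm_real, Real.norm_eq_abs]
    have h1 : L2sq ψ ≤ k^2 * L2sq (chi1 ψ) + L2sq ψ := by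
      nlinarith [L2sq_nonneg (chi1 ψ), sq_nonneg k]
    exact h1.trans (le_abs_self _)
  -- small bound
  have hPwn_small : ‖∫ y in (-1:ℝ)..1, w y * star (chi ψ y)‖ ≤ W * (8*nψ) := by
    calc ‖∫ y in (-1:ℝ)..1, w y * star (chi ψ y)‖
        ≤ ∫ y in (-1:ℝ)..1, ‖w y * star (chi ψ y)‖ :=
          intervalIntegral.norm_integral_le_integral_norm (by norm_num)
      _ = ∫ y in (-1:ℝ)..1, ‖w y‖ * ‖chi ψ y‖ := by
          apply intervalIntegral.integral_congr
          intro y _; simp [norm_mul, norm_star]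
      _ ≤ W * Real.sqrt (L2sq (chi ψ)) := cs_lemma w (chi ψ) hwc hχc
      _ ≤ W * (8*nψ) := mul_le_mul_of_nonneg_left hχs hW0
  have key2 : nψ^2 ≤ W * (8*nψ) := by
    rw [hnψsq]
    exact hlow.trans hPwn_small
  -- oscillatory identity
  set c : ℂ := Complex.I * (k:ℂ) * (t:ℂ) with hc
  have hEd : ∀ y : ℝ, HasDerivAt (fun x : ℝ => Complex.exp (-(c*x)))
      (-c * Complex.exp (-(c*y))) y := by
    intro y
    have h1 : HasDerivAt (fun x : ℝ => (x:ℂ)) 1 y := by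
      exact Complex.ofRealCLM.hasDerivAt (x := y)
    have := ((h1.const_mul c).neg).cexp
    simpa [mul_comm] using this
  have hEc : Continuous (fun y : ℝ => Complex.exp (-(c*y))) :=
    Complex.continuous_exp.comp ((continuous_const.mul Complex.continuous_ofReal).neg)
  have hEn : ∀ y : ℝ, ‖Complex.exp (-(c*(y:ℝ)))‖ = 1 := by
    intro y
    have hre : (-(c*(y:ℂ))).re = 0 := by
      rw [hc]; simp [Complex.mul_re, Complex.mul_im]
    rw [Complex.norm_exp, hre, Real.exp_zero]
  have hEφ : ∀ y : ℝ, Complex.exp (-(c*y)) * φ y = w y := by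
    intro y
    rw [hφdef]; unfold ew
    rw [← mul_assoc, ← Complex.exp_add,
      show -(c*(y:ℂ)) + Complex.I * (k:ℂ) * (y:ℂ) * (t:ℂ) = 0 by rw [hc]; ring,
      Complex.exp_zero, one_mul]
  set fv : ℝ → ℂ := fun y => φ y * star (chi ψ y) with hfv
  set f1 : ℝ → ℂ := fun y => deriv φ y * star (chi ψ y) + φ y * star (chi1 ψ y) with hf1
  set f2 : ℝ → ℂ := fun y => (deriv (deriv φ) y * star (chi ψ y) + deriv φ y * star (chi1 ψ y))
      + (deriv φ y * star (chi1 ψ y) + φ y * star (-ψ y)) with hf2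
  have hfd : ∀ y, HasDerivAt fv (f1 y) y := by
    intro y
    simp only [hfv, hf1]
    exact (hφat y).mul ((chi_deriv hψc y).star)
  have hf1d : ∀ y, HasDerivAt f1 (f2 y) y := by
    intro y
    simp only [hf1, hf2]
    exact ((hφ'at y).mul ((chi_deriv hψc y).star)).add
      ((hφat y).mul ((chi1_deriv hψc y).star))
  have hfvc : Continuous fv := hφc.mul hχsc
  have hf1c : Continuous f1 := (hφ'c.mul hχsc).add (hφc.mul hχ₁sc)
  have hf2c : Continuous f2 :=
    ((hφ''c.mul hχsc).add (hφ'c.mul hχ₁sc)).add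
      ((hφ'c.mul hχ₁sc).add (hφc.mul (hψc.neg.star)))
  have hfvm : fv (-1) = 0 := by simp only [hfv]; rw [hφm, zero_mul]
  have hfvp : fv 1 = 0 := by simp only [hfv]; rw [hφp, zero_mul]
  have hf1m : f1 (-1) = 0 := by simp only [hf1]; rw [hφm, chi_bm]; simp
  have hf1p : f1 1 = 0 := by simp only [hf1]; rw [hφp, chi_bp]; simp
  have hosc0 : (∫ y in (-1:ℝ)..1, (-c * Complex.exp (-(c*y)) * (f1 y + c * fv y)
      + Complex.exp (-(c*y)) * (f2 y + c * f1 y))) = 0 := by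
    apply ibp_zero (fun y => Complex.exp (-(c*y)) * (f1 y + c * fv y))
    · intro y
      exact (hEd y).mul ((hf1d y).add ((hfd y).const_mul c))
    · exact ((continuous_const.mul hEc).mul (hf1c.add (continuous_const.mul hfvc))).add
        (hEc.mul (hf2c.add (continuous_const.mul hf1c)))
    · rw [hf1m, hfvm]; simp
    · rw [hf1p, hfvp]; simp
  have hosc1 : (∫ y in (-1:ℝ)..1, Complex.exp (-(c*y)) * f2 y)
      = c^2 * ∫ y in (-1:ℝ)..1, w y * star (chi ψ y) := by
    have hsplit : (∫ y in (-1:ℝ)..1, (-c * Complex.exp (-(c*y)) * (f1 y + c * fv y)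
        + Complex.exp (-(c*y)) * (f2 y + c * f1 y)))
        = (∫ y in (-1:ℝ)..1, Complex.exp (-(c*y)) * f2 y)
          - c^2 * ∫ y in (-1:ℝ)..1, Complex.exp (-(c*y)) * fv y := by
      rw [← intervalIntegral.integral_const_mul, ← intervalIntegral.integral_sub
        (hInt (fun y => Complex.exp (-(c*y)) * f2 y) (hEc.mul hf2c)) ((hInt (fun y => Complex.exp (-(c*y)) * fv y) (hEc.mul hfvc)).const_mul _)]
      apply intervalIntegral.integral_congr
      intro y _
      simp only
      ring
    have hEfv : (∫ y in (-1:ℝ)..1, Complex.exp (-(c*y)) * fv y)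
        = ∫ y in (-1:ℝ)..1, w y * star (chi ψ y) := by
      apply intervalIntegral.integral_congr
      intro y _
      simp only [hfv]
      rw [← mul_assoc, hEφ y]
    rw [hsplit, hEfv] at hosc0
    exact sub_eq_zero.mp hosc0
  have hbig : ‖(∫ y in (-1:ℝ)..1, Complex.exp (-(c*y)) * f2 y)‖ ≤ (8*A + 8*B + W)*nψ := by
    have hpt : ∀ y : ℝ, ‖f2 y‖ ≤ ‖deriv (deriv φ) y‖*‖chi ψ y‖
        + (2*(‖deriv φ y‖*‖chi1 ψ y‖) + ‖w y‖*‖ψ y‖) := by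
      intro y
      simp only [hf2]
      have h1 := norm_add_le (deriv (deriv φ) y * star (chi ψ y) + deriv φ y * star (chi1 ψ y))
        (deriv φ y * star (chi1 ψ y) + φ y * star (-ψ y))
      have h2 := norm_add_le (deriv (deriv φ) y * star (chi ψ y)) (deriv φ y * star (chi1 ψ y))
      have h3 := norm_add_le (deriv φ y * star (chi1 ψ y)) (φ y * star (-ψ y))
      simp only [norm_mul, norm_star, norm_neg] at h1 h2 h3
      rw [hφnorm y] at h3
      linarith
    calc ‖(∫ y in (-1:ℝ)..1, Complex.exp (-(c*y)) * f2 y)‖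
        ≤ ∫ y in (-1:ℝ)..1, ‖Complex.exp (-(c*y)) * f2 y‖ :=
          intervalIntegral.norm_integral_le_integral_norm (by norm_num)
      _ = ∫ y in (-1:ℝ)..1, ‖f2 y‖ := by
          apply intervalIntegral.integral_congr
          intro y _
          simp only
          rw [norm_mul, hEn y, one_mul]
      _ ≤ ∫ y in (-1:ℝ)..1, (‖deriv (deriv φ) y‖*‖chi ψ y‖
            + (2*(‖deriv φ y‖*‖chi1 ψ y‖) + ‖w y‖*‖ψ y‖)) := by
          apply intervalIntegral.integral_mono_on (by norm_num)
            (hf2c.norm.intervalIntegrable _ _)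
            (((hφ''c.norm.mul hχc.norm).add
              ((continuous_const.mul (hφ'c.norm.mul hχ₁c.norm)).add
                (hwc.norm.mul hψc.norm))).intervalIntegrable _ _)
          intro y _
          exact hpt y
      _ = (∫ y in (-1:ℝ)..1, ‖deriv (deriv φ) y‖*‖chi ψ y‖)
          + (2*(∫ y in (-1:ℝ)..1, ‖deriv φ y‖*‖chi1 ψ y‖)
            + ∫ y in (-1:ℝ)..1, ‖w y‖*‖ψ y‖) := by
          rw [intervalIntegral.integral_add ((hφ''c.norm.mul hχc.norm).intervalIntegrable (μ := volume) (u := fun y => ‖deriv (deriv φ) y‖*‖chi ψ y‖) _ _)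
            (((continuous_const.mul (hφ'c.norm.mul hχ₁c.norm)).add
              (hwc.norm.mul hψc.norm)).intervalIntegrable (μ := volume) (u := fun y => 2*(‖deriv φ y‖*‖chi1 ψ y‖) + ‖w y‖*‖ψ y‖) _ _),
            intervalIntegral.integral_add
              ((continuous_const.mul (hφ'c.norm.mul hχ₁c.norm)).intervalIntegrable (μ := volume) (u := fun y => 2*(‖deriv φ y‖*‖chi1 ψ y‖)) _ _)
              ((hwc.norm.mul hψc.norm).intervalIntegrable (μ := volume) (u := fun y => ‖w y‖*‖ψ y‖) _ _),
            intervalIntegral.integral_const_mul]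
      _ ≤ A * (8*nψ) + (2*(B*(4*nψ)) + W*nψ) := by
          have e1 : (∫ y in (-1:ℝ)..1, ‖deriv (deriv φ) y‖*‖chi ψ y‖) ≤ A*(8*nψ) :=
            (cs_lemma _ _ hφ''c hχc).trans (mul_le_mul_of_nonneg_left hχs hA0)
          have e2 : (∫ y in (-1:ℝ)..1, ‖deriv φ y‖*‖chi1 ψ y‖) ≤ B*(4*nψ) :=
            (cs_lemma _ _ hφ'c hχ₁c).trans (mul_le_mul_of_nonneg_left hχ₁s hB0)
          have e3 : (∫ y in (-1:ℝ)..1, ‖w y‖*‖ψ y‖) ≤ W*nψ :=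
            cs_lemma _ _ hwc hψc
          linarith
      _ = (8*A + 8*B + W)*nψ := by ring
  have hcnorm : ‖c‖ = |k*t| := by
    rw [hc, norm_mul, norm_mul, Complex.norm_I, one_mul, Complex.norm_real,
      Complex.norm_real, Real.norm_eq_abs, Real.norm_eq_abs, ← abs_mul]
  have key1 : (k*t)^2 * nψ^2 ≤ (8*A + 8*B + W)*nψ := by
    have h1 : (k*t)^2 * L2sq ψ ≤ (k*t)^2 * ‖∫ y in (-1:ℝ)..1, w y * star (chi ψ y)‖ :=
      mul_le_mul_of_nonneg_left hlow (sq_nonneg _)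
    have h2 : (k*t)^2 * ‖∫ y in (-1:ℝ)..1, w y * star (chi ψ y)‖
        = ‖c^2 * ∫ y in (-1:ℝ)..1, w y * star (chi ψ y)‖ := by
      rw [norm_mul, norm_pow, hcnorm, _root_.sq_abs]
    rw [hnψsq]
    calc (k*t)^2 * L2sq ψ ≤ ‖c^2 * ∫ y in (-1:ℝ)..1, w y * star (chi ψ y)‖ := by
          rw [← h2]; exact h1
      _ = ‖(∫ y in (-1:ℝ)..1, Complex.exp (-(c*y)) * f2 y)‖ := by rw [hosc1]
      _ ≤ (8*A + 8*B + W)*nψ := hbig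
  -- final combination
  rcases eq_or_lt_of_le hnψ0 with hz | hpos
  · rw [← hz]
    positivity
  have hWS : W ≤ S := by
    rw [hW, hS]
    apply Real.sqrt_le_sqrt
    have h1 := L2sq_nonneg (deriv (deriv φ)); have h2 := L2sq_nonneg (deriv φ)
    linarith
  have h14 : 8*A + 8*B + W ≤ 14*S := by
    have hsq : (8*A + 8*B + W)^2 ≤ (14*S)^2 := by
      rw [mul_pow, hSsq]
      nlinarith [sq_nonneg (A-B), sq_nonneg (A-W), sq_nonneg (B-W), hA0, hB0, hW0]
    calc 8*A + 8*B + W = Real.sqrt ((8*A + 8*B + W)^2) :=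
          (Real.sqrt_sq (by positivity)).symm
      _ ≤ Real.sqrt ((14*S)^2) := Real.sqrt_le_sqrt hsq
      _ = 14*S := Real.sqrt_sq (by positivity)
  set D := (1 + |k*t|)^2 with hD
  have hD0 : 0 < D := by rw [hD]; positivity
  have hfinal : nψ * D ≤ 100 * S := by
    rcases le_or_gt |k*t| 1 with hkt | hkt
    · have hn8 : nψ ≤ 8*W := by
        rw [show nψ^2 = nψ*nψ from sq nψ, show W*(8*nψ) = (8*W)*nψ from by ring] at key2
        exact le_of_mul_le_mul_right key2 hpos
      have hD4 : D ≤ 4 := by rw [hD]; nlinarith [abs_nonneg (k*t)]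
      have hm : nψ * D ≤ (8*W) * 4 :=
        mul_le_mul hn8 hD4 hD0.le (by positivity)
      have h32 : (8*W)*4 = 32*W := by ring
      linarith [hWS, hS0]
    · have h1 : (k*t)^2 * nψ ≤ 8*A+8*B+W := by
        rw [show (k*t)^2*nψ^2 = ((k*t)^2*nψ)*nψ from by ring] at key1
        exact le_of_mul_le_mul_right key1 hpos
      have hD4 : D ≤ 4*(k*t)^2 := by
        rw [hD]
        have h2 : (1+|k*t|) ≤ 2*|k*t| := by linarith
        calc (1+|k*t|)^2 ≤ (2*|k*t|)^2 := by
              apply pow_le_pow_left₀ (by positivity) h2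
          _ = 4*(k*t)^2 := by rw [mul_pow, _root_.sq_abs]; ring
      have hm : nψ * D ≤ nψ * (4*(k*t)^2) := mul_le_mul_of_nonneg_left hD4 hnψ0
      have e : nψ*(4*(k*t)^2) = 4*((k*t)^2*nψ) := by ring
      linarith [h14, hS0]
  rw [show (100:ℝ) * D⁻¹ * S = (100*S)/D by ring]
  rw [le_div_iff₀ hD0]
  linarith [hfinal]
end

section
/- Let ν > 0 and k ∈ ℝ. Let f : [0,∞) × [−1,1] → ℂ be continuous, with continuous derivatives ∂_t f, ∂_y f, ∂²_y f, satisfying f(t,−1) = f(t,1) = 0 for all t ≥ 0 and ∂_t f(t,y) = ν(∂²_y f(t,y) − k² f(t,y)) − i k y f(t,y) + g(t,y) on [0,∞) × (−1,1), where g : [0,∞) × [−1,1] → ℂ is continuous. Suppose that for each t, φ(t,·) : [−1,1] → ℂ is twice continuously differentiable with φ(t,±1) = 0 and ∂²_y φ(t,y) − k² φ(t,y) = g(t,y) on (−1,1), with φ and ∂_y φ jointly continuous. Then for every t ≥ 0: ‖f(t,·)‖²_{L²(−1,1)} + ν ∫_{0}^{t} ( ‖∂_y f(s,·)‖²_{L²}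 + k² ‖f(s,·)‖²_{L²} ) ds ≤ ‖f(0,·)‖²_{L²(−1,1)} + ν^{−1} ∫_{0}^{t} ( ‖∂_y φ(s,·)‖²_{L²} + k² ‖φ(s,·)‖²_{L²} ) ds. -/
open Set MeasureTheory

lemma young_aux {ν : ℝ} (hν : 0 < ν) (a b : ℝ) :
    a * b ≤ ν / 2 * a ^ 2 + ν⁻¹ / 2 * b ^ 2 := by
  have h := sq_nonneg (ν * a - b)
  have hν' : 0 < ν⁻¹ := inv_pos.2 hν
  have h2 : ν * (ν⁻¹) = 1 := mul_inv_cancel₀ hν.ne'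
  nlinarith [mul_nonneg hν'.le h]

lemma hasDerivAt_normSq {z : ℝ → ℂ} {w : ℂ} {x : ℝ} (h : HasDerivAt z w x) :
    HasDerivAt (fun s => ‖z s‖ ^ 2) (2 * ((z x).re * w.re + (z x).im * w.im)) x := by
  have hre : HasDerivAt (fun s => (z s).re) w.re x :=
    (Complex.reCLM.hasFDerivAt.comp_hasDerivAt x h)
  have him : HasDerivAt (fun s => (z s).im) w.im x :=
    (Complex.imCLM.hasFDerivAt.comp_hasDerivAt x h)
  have : HasDerivAt (fun s => (z s).re * (z s).re + (z s).im * (z s).im)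
      (w.re * (z x).re + (z x).re * w.re + (w.im * (z x).im + (z x).im * w.im)) x :=
    ((hre.mul hre).add (him.mul him))
  have heq : (fun s => ‖z s‖ ^ 2) = fun s => (z s).re * (z s).re + (z s).im * (z s).im := by
    funext s
    rw [Complex.sq_norm, Complex.normSq_apply]
  rw [heq]
  convert this using 1
  ring

lemma cont_slice {f : ℝ → ℝ → ℂ}
    (hf : ContinuousOn (fun p : ℝ × ℝ => f p.1 p.2) (Ici 0 ×ˢ Icc (-1) 1))
    {s : ℝ} (hs : 0 ≤ s) : ContinuousOn (fun y => f s y) (Icc (-1 : ℝ) 1) := by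
  have : ContinuousOn (fun y : ℝ => ((s, y) : ℝ × ℝ)) (Icc (-1 : ℝ) 1) :=
    (continuous_const.prodMk continuous_id).continuousOn
  exact hf.comp this (fun y hy => ⟨hs, hy⟩)

lemma cont_L2 {f : ℝ → ℝ → ℂ}
    (hf : ContinuousOn (fun p : ℝ × ℝ => f p.1 p.2) (Ici 0 ×ˢ Icc (-1) 1)) :
    ContinuousOn (fun s => L2sq (f s)) (Ici (0 : ℝ)) := by
  set c : ℝ × ℝ → ℝ × ℝ := fun p => (max p.1 0, min (max p.2 (-1)) 1) with hc
  have hccont : Continuous c :=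
    (continuous_fst.max continuous_const).prodMk
      ((continuous_snd.max continuous_const).min continuous_const)
  have hmaps : ∀ p : ℝ × ℝ, c p ∈ Ici (0:ℝ) ×ˢ Icc (-1:ℝ) 1 := by
    intro p
    refine ⟨mem_Ici.2 (le_max_right _ _), ⟨?_, min_le_right _ _⟩⟩
    exact le_min (le_max_right _ _) (by norm_num)
  have hft : Continuous (fun p : ℝ × ℝ => f (c p).1 (c p).2) :=
    continuousOn_univ.1
      (hf.comp hccont.continuousOn (fun p _ => hmaps p))
  have hK : Continuous fun s : ℝ => ∫ y in (-1:ℝ)..1, ‖f (c (s, y)).1 (c (s, y)).2‖ ^ 2 := by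
    apply intervalIntegral.continuous_parametric_intervalIntegral_of_continuous'
    exact ((hft.comp (continuous_id)).norm.pow 2).comp (continuous_id)
  apply (hK.continuousOn (s := Ici 0)).congr
  intro s hs
  simp only [L2sq]
  apply intervalIntegral.integral_congr
  intro y hy
  rw [uIcc_of_le (by norm_num : (-1:ℝ) ≤ 1)] at hy
  have h1 : max s 0 = s := max_eq_left hs
  have h2 : min (max y (-1)) 1 = y := by
    rw [max_eq_left hy.1, min_eq_left hy.2]
  simp [hc, h1, h2]

lemma hasDerivAt_L2sq {f ft : ℝ → ℝ → ℂ}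
    (hf_cont : ContinuousOn (fun p : ℝ × ℝ => f p.1 p.2) (Ici 0 ×ˢ Icc (-1) 1))
    (hft_cont : ContinuousOn (fun p : ℝ × ℝ => ft p.1 p.2) (Ici 0 ×ˢ Icc (-1) 1))
    (hfd_t : ∀ t ∈ Ici (0 : ℝ), ∀ y ∈ Icc (-1 : ℝ) 1,
      HasDerivAt (fun s => f s y) (ft t y) t)
    {s₀ : ℝ} (hs₀ : 0 < s₀) :
    HasDerivAt (fun s => L2sq (f s))
      (∫ y in (-1:ℝ)..1,
        2 * ((f s₀ y).re * (ft s₀ y).re + (f s₀ y).im * (ft s₀ y).im)) s₀ := by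
  have uI : uIcc (-1:ℝ) 1 = Icc (-1:ℝ) 1 := uIcc_of_le (by norm_num)
  have uIo : uIoc (-1:ℝ) 1 = Ioc (-1:ℝ) 1 := uIoc_of_le (by norm_num)
  -- continuity of the would-be derivative, jointly
  have c1 : ContinuousOn (fun p : ℝ × ℝ => (f p.1 p.2).re) (Ici 0 ×ˢ Icc (-1) 1) :=
    Complex.continuous_re.comp_continuousOn hf_cont
  have c2 : ContinuousOn (fun p : ℝ × ℝ => (ft p.1 p.2).re) (Ici 0 ×ˢ Icc (-1) 1) :=
    Complex.continuous_re.comp_continuousOn hft_cont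
  have c3 : ContinuousOn (fun p : ℝ × ℝ => (f p.1 p.2).im) (Ici 0 ×ˢ Icc (-1) 1) :=
    Complex.continuous_im.comp_continuousOn hf_cont
  have c4 : ContinuousOn (fun p : ℝ × ℝ => (ft p.1 p.2).im) (Ici 0 ×ˢ Icc (-1) 1) :=
    Complex.continuous_im.comp_continuousOn hft_cont
  have contD : ContinuousOn
      (fun p : ℝ × ℝ => 2 * ((f p.1 p.2).re * (ft p.1 p.2).re + (f p.1 p.2).im * (ft p.1 p.2).im))
      (Ici 0 ×ˢ Icc (-1) 1) :=
    continuousOn_const.mul ((c1.mul c2).add (c3.mul c4))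
  have hKsub : (Icc (0:ℝ) (2*s₀) ×ˢ Icc (-1:ℝ) 1) ⊆ (Ici 0 ×ˢ Icc (-1) 1) := by
    intro p hp
    exact ⟨hp.1.1, hp.2⟩
  obtain ⟨M, hM⟩ := (isCompact_Icc.prod isCompact_Icc).exists_bound_of_continuousOn
    (contD.mono hKsub)
  have key := intervalIntegral.hasDerivAt_integral_of_dominated_loc_of_deriv_le
    (F := fun s y => ‖f s y‖ ^ 2)
    (F' := fun s y => 2 * ((f s y).re * (ft s y).re + (f s y).im * (ft s y).im))
    (x₀ := s₀) (a := (-1:ℝ)) (b := 1) (bound := fun _ => M) (s := Metric.ball s₀ s₀) (μ := volume) (Metric.ball_mem_nhds s₀ hs₀)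
    ?_ ?_ ?_ ?_ ?_ ?_
  · exact key.2
  · -- measurability of F near s₀
    filter_upwards [Ioi_mem_nhds hs₀] with s hs
    have csl : ContinuousOn (fun y => ‖f s y‖ ^ 2) (uIoc (-1:ℝ) 1) := by
      rw [uIo]
      exact ((cont_slice hf_cont (le_of_lt hs)).norm.pow 2).mono Ioc_subset_Icc_self
    exact csl.aestronglyMeasurable measurableSet_uIoc
  · -- integrability of F s₀
    have csl : ContinuousOn (fun y => ‖f s₀ y‖ ^ 2) (uIcc (-1:ℝ) 1) := by
      rw [uI]
      exact (cont_slice hf_cont (le_of_lt hs₀)).norm.pow 2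
    exact csl.intervalIntegrable
  · -- measurability of F' s₀
    have csl : ContinuousOn
        (fun y => 2 * ((f s₀ y).re * (ft s₀ y).re + (f s₀ y).im * (ft s₀ y).im))
        (uIoc (-1:ℝ) 1) := by
      rw [uIo]
      refine ContinuousOn.mono ?_ Ioc_subset_Icc_self
      have d1 := cont_slice hf_cont (le_of_lt hs₀)
      have d2 := cont_slice hft_cont (le_of_lt hs₀)
      exact continuousOn_const.mul
        (((Complex.continuous_re.comp_continuousOn d1).mul
          (Complex.continuous_re.comp_continuousOn d2)).add
        ((Complex.continuous_im.comp_continuousOn d1).mul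
          (Complex.continuous_im.comp_continuousOn d2)))
    exact csl.aestronglyMeasurable measurableSet_uIoc
  · -- bound
    apply Filter.Eventually.of_forall
    intro y hy x hx
    have hx' : x ∈ Icc (0:ℝ) (2*s₀) := by
      rw [Metric.mem_ball, Real.dist_eq, abs_sub_lt_iff] at hx
      constructor <;> linarith [hx.1, hx.2]
    have hy' : y ∈ Icc (-1:ℝ) 1 := by
      rw [uIo] at hy
      exact Ioc_subset_Icc_self hy
    exact hM (x, y) ⟨hx', hy'⟩
  · exact intervalIntegrable_const
  · -- differentiability
    apply Filter.Eventually.of_forall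
    intro y hy x hx
    have hx0 : (0:ℝ) ≤ x := by
      rw [Metric.mem_ball, Real.dist_eq, abs_sub_lt_iff] at hx
      linarith [hx.1, hx.2]
    have hy' : y ∈ Icc (-1:ℝ) 1 := by
      rw [uIo] at hy
      exact Ioc_subset_Icc_self hy
    exact hasDerivAt_normSq (hfd_t x hx0 y hy')
lemma energy_ineq_at {ν k : ℝ} (hν : 0 < ν)
    (F Ft Fy Fyy G Φ Φy Φyy : ℝ → ℂ)
    (hF : ∀ y ∈ Icc (-1:ℝ) 1, HasDerivAt F (Fy y) y)
    (hFy : ∀ y ∈ Icc (-1:ℝ) 1, HasDerivAt Fy (Fyy y) y)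
    (hΦ : ∀ y ∈ Icc (-1:ℝ) 1, HasDerivAt Φ (Φy y) y)
    (hΦy : ∀ y ∈ Icc (-1:ℝ) 1, HasDerivAt Φy (Φyy y) y)
    (hFt_cont : ContinuousOn Ft (Icc (-1:ℝ) 1))
    (hFyy_cont : ContinuousOn Fyy (Icc (-1:ℝ) 1))
    (hG_cont : ContinuousOn G (Icc (-1:ℝ) 1))
    (hbF : F (-1) = 0 ∧ F 1 = 0)
    (heq : ∀ y ∈ Ioo (-1:ℝ) 1,
      Ft y = (ν:ℂ) * (Fyy y - (k:ℂ)^2 * F y) - Complex.I * (k:ℂ) * (y:ℂ) * F y + G y)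
    (hΦeq : ∀ y ∈ Ioo (-1:ℝ) 1, Φyy y - (k:ℂ)^2 * Φ y = G y) :
    (∫ y in (-1:ℝ)..1, 2 * ((F y).re * (Ft y).re + (F y).im * (Ft y).im))
      ≤ -(ν * ((∫ y in (-1:ℝ)..1, ‖Fy y‖^2) + k^2 * ∫ y in (-1:ℝ)..1, ‖F y‖^2))
        + ν⁻¹ * ((∫ y in (-1:ℝ)..1, ‖Φy y‖^2) + k^2 * ∫ y in (-1:ℝ)..1, ‖Φ y‖^2) := by
  have uI : uIcc (-1:ℝ) 1 = Icc (-1:ℝ) 1 := uIcc_of_le (by norm_num)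
  have uIo : uIoc (-1:ℝ) 1 = Ioc (-1:ℝ) 1 := uIoc_of_le (by norm_num)
  have hmin : min (-1:ℝ) 1 = -1 := by norm_num
  have hmax : max (-1:ℝ) 1 = 1 := by norm_num
  -- continuity from differentiability
  have hFc : ContinuousOn F (Icc (-1:ℝ) 1) := fun y hy => (hF y hy).continuousAt.continuousWithinAt
  have hFyc : ContinuousOn Fy (Icc (-1:ℝ) 1) := fun y hy => (hFy y hy).continuousAt.continuousWithinAt
  have hΦc : ContinuousOn Φ (Icc (-1:ℝ) 1) := fun y hy => (hΦ y hy).continuousAt.continuousWithinAt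
  have hΦyc : ContinuousOn Φy (Icc (-1:ℝ) 1) := fun y hy => (hΦy y hy).continuousAt.continuousWithinAt
  have hsFc : ContinuousOn (fun y => star (F y)) (Icc (-1:ℝ) 1) := continuous_star.comp_continuousOn hFc
  have hsFyc : ContinuousOn (fun y => star (Fy y)) (Icc (-1:ℝ) 1) := continuous_star.comp_continuousOn hFyc
  -- integrability helper
  have ii : ∀ {E : Type} [NormedAddCommGroup E] (h : ℝ → E),
      ContinuousOn h (Icc (-1:ℝ) 1) → IntervalIntegrable h volume (-1) 1 := by
    intro E _ h hc
    rw [← uI] at hc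
    exact hc.intervalIntegrable
  -- a.e. membership in Ioo
  have hne : ∀ᵐ y : ℝ ∂volume, y ≠ (1:ℝ) := by
    rw [ae_iff]
    have : {y : ℝ | ¬ y ≠ (1:ℝ)} = {1} := by ext y; simp
    rw [this]
    exact measure_singleton 1
  have hIoo : ∀ᵐ y : ℝ ∂volume, y ∈ uIoc (-1:ℝ) 1 → y ∈ Ioo (-1:ℝ) 1 := by
    filter_upwards [hne] with y hy hmem
    rw [uIo] at hmem
    exact ⟨hmem.1, lt_of_le_of_ne hmem.2 hy⟩
  -- Φyy is a.e. equal to a continuous function, hence integrable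
  have iΦyy : IntervalIntegrable Φyy volume (-1) 1 := by
    have base : IntervalIntegrable (fun y => G y + (k:ℂ)^2 * Φ y) volume (-1) 1 :=
      ii _ (hG_cont.add (continuousOn_const.mul hΦc))
    rw [intervalIntegrable_iff] at base ⊢
    apply base.congr
    have h1 : ∀ᵐ y ∂(volume.restrict (uIoc (-1:ℝ) 1)), y ∈ uIoc (-1:ℝ) 1 :=
      ae_restrict_mem measurableSet_uIoc
    filter_upwards [h1, ae_restrict_of_ae hIoo] with y hy hio
    have := hΦeq y (hio hy)
    rw [← this]; ring
  -- integration by parts 1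
  have hus : ∀ x ∈ Ioo (min (-1:ℝ) 1) (max (-1:ℝ) 1),
      HasDerivAt (fun y => star (F y)) (star (Fy x)) x := by
    rw [hmin, hmax]
    exact fun x hx => (hF x (Ioo_subset_Icc_self hx)).star
  have IBP1 : ∫ y in (-1:ℝ)..1, star (F y) * Fyy y = -(∫ y in (-1:ℝ)..1, star (Fy y) * Fy y) := by
    have h := intervalIntegral.integral_mul_deriv_eq_deriv_mul_of_hasDerivAt
      (u := fun y => star (F y)) (v := Fy) (u' := fun y => star (Fy y)) (v' := Fyy)
      (by rw [uI]; exact hsFc) (by rw [uI]; exact hFyc)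
      hus (by rw [hmin, hmax]; exact fun x hx => hFy x (Ioo_subset_Icc_self hx))
      (ii _ hsFyc) (ii _ hFyy_cont)
    rw [h]
    simp [hbF.1, hbF.2]
  have IBP2 : ∫ y in (-1:ℝ)..1, star (F y) * Φyy y = -(∫ y in (-1:ℝ)..1, star (Fy y) * Φy y) := by
    have h := intervalIntegral.integral_mul_deriv_eq_deriv_mul_of_hasDerivAt
      (u := fun y => star (F y)) (v := Φy) (u' := fun y => star (Fy y)) (v' := Φyy)
      (by rw [uI]; exact hsFc) (by rw [uI]; exact hΦyc)
      hus (by rw [hmin, hmax]; exact fun x hx => hΦy x (Ioo_subset_Icc_self hx))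
      (ii _ hsFyc) iΦyy
    rw [h]
    simp [hbF.1, hbF.2]
  -- real-valued reductions
  have star_mul_self : ∀ z : ℂ, star z * z = ((‖z‖^2 : ℝ) : ℂ) := by
    intro z
    calc star z * z = z * (starRingEnd ℂ) z := by rw [Complex.star_def]; ring
    _ = (Complex.normSq z : ℂ) := Complex.mul_conj _
    _ = ((‖z‖^2 : ℝ) : ℂ) := by rw [Complex.normSq_eq_norm_sq]
  have eq5 : (∫ y in (-1:ℝ)..1, star (Fy y) * Fy y) = ((∫ y in (-1:ℝ)..1, ‖Fy y‖^2 : ℝ) : ℂ) := by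
    rw [intervalIntegral.integral_congr (g := fun y => ((‖Fy y‖^2 : ℝ) : ℂ))
      (fun y _ => star_mul_self (Fy y))]
    exact intervalIntegral.integral_ofReal
  have eq6 : (∫ y in (-1:ℝ)..1, star (F y) * F y) = ((∫ y in (-1:ℝ)..1, ‖F y‖^2 : ℝ) : ℂ) := by
    rw [intervalIntegral.integral_congr (g := fun y => ((‖F y‖^2 : ℝ) : ℂ))
      (fun y _ => star_mul_self (F y))]
    exact intervalIntegral.integral_ofReal
  have eq7 : (∫ y in (-1:ℝ)..1, (y:ℂ) * (star (F y) * F y))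
      = ((∫ y in (-1:ℝ)..1, y * ‖F y‖^2 : ℝ) : ℂ) := by
    rw [intervalIntegral.integral_congr (g := fun y => ((y * ‖F y‖^2 : ℝ) : ℂ))
      (fun y _ => by rw [star_mul_self (F y)]; push_cast; ring)]
    exact intervalIntegral.integral_ofReal
  -- main splitting
  have iA : IntervalIntegrable (fun y => star (F y) * Fyy y) volume (-1) 1 := ii _ (hsFc.mul hFyy_cont)
  have iB : IntervalIntegrable (fun y => star (F y) * F y) volume (-1) 1 := ii _ (hsFc.mul hFc)
  have iYB : IntervalIntegrable (fun y => (y:ℂ) * (star (F y) * F y)) volume (-1) 1 :=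
    ii _ ((Complex.continuous_ofReal.continuousOn).mul (hsFc.mul hFc))
  have iG : IntervalIntegrable (fun y => star (F y) * G y) volume (-1) 1 := ii _ (hsFc.mul hG_cont)
  have iP : IntervalIntegrable (fun y => star (Fy y) * Φy y) volume (-1) 1 := ii _ (hsFyc.mul hΦyc)
  have iQ : IntervalIntegrable (fun y => star (F y) * Φ y) volume (-1) 1 := ii _ (hsFc.mul hΦc)
  have eq1 : (∫ y in (-1:ℝ)..1, star (F y) * Ft y)
      = ∫ y in (-1:ℝ)..1, ((ν:ℂ) * (star (F y) * Fyy y) - ((ν:ℂ)*(k:ℂ)^2) * (star (F y) * F y)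
          - (Complex.I*(k:ℂ)) * ((y:ℂ) * (star (F y) * F y)) + star (F y) * G y) := by
    apply intervalIntegral.integral_congr_ae
    filter_upwards [hIoo] with y hy hmem
    rw [heq y (hy hmem)]
    ring
  have eq1b : (∫ y in (-1:ℝ)..1, ((ν:ℂ) * (star (F y) * Fyy y) - ((ν:ℂ)*(k:ℂ)^2) * (star (F y) * F y)
          - (Complex.I*(k:ℂ)) * ((y:ℂ) * (star (F y) * F y)) + star (F y) * G y))
      = (ν:ℂ) * (∫ y in (-1:ℝ)..1, star (F y) * Fyy y)
        - ((ν:ℂ)*(k:ℂ)^2) * (∫ y in (-1:ℝ)..1, star (F y) * F y)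
        - (Complex.I*(k:ℂ)) * (∫ y in (-1:ℝ)..1, (y:ℂ) * (star (F y) * F y))
        + ∫ y in (-1:ℝ)..1, star (F y) * G y := by
    rw [intervalIntegral.integral_add (((iA.const_mul _).sub (iB.const_mul _)).sub (iYB.const_mul _)) iG,
        intervalIntegral.integral_sub ((iA.const_mul _).sub (iB.const_mul _)) (iYB.const_mul _),
        intervalIntegral.integral_sub (iA.const_mul _) (iB.const_mul _),
        intervalIntegral.integral_const_mul, intervalIntegral.integral_const_mul,
        intervalIntegral.integral_const_mul]
  have eq4 : (∫ y in (-1:ℝ)..1, star (F y) * Φyy y)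
      = (∫ y in (-1:ℝ)..1, star (F y) * G y) + (k:ℂ)^2 * ∫ y in (-1:ℝ)..1, star (F y) * Φ y := by
    have h : (∫ y in (-1:ℝ)..1, star (F y) * Φyy y)
        = ∫ y in (-1:ℝ)..1, (star (F y) * G y + (k:ℂ)^2 * (star (F y) * Φ y)) := by
      apply intervalIntegral.integral_congr_ae
      filter_upwards [hIoo] with y hy hmem
      rw [← hΦeq y (hy hmem)]
      ring
    rw [h, intervalIntegral.integral_add iG (iQ.const_mul _), intervalIntegral.integral_const_mul]
  -- put it together
  set A : ℝ := ∫ y in (-1:ℝ)..1, ‖Fy y‖^2 with hA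
  set B : ℝ := ∫ y in (-1:ℝ)..1, ‖F y‖^2 with hB
  set C : ℝ := ∫ y in (-1:ℝ)..1, ‖Φy y‖^2 with hC
  set D : ℝ := ∫ y in (-1:ℝ)..1, ‖Φ y‖^2 with hD
  set c : ℝ := ∫ y in (-1:ℝ)..1, y * ‖F y‖^2 with hc
  set P : ℂ := ∫ y in (-1:ℝ)..1, star (Fy y) * Φy y with hP
  set Q : ℂ := ∫ y in (-1:ℝ)..1, star (F y) * Φ y with hQ
  have hG_eq : (∫ y in (-1:ℝ)..1, star (F y) * G y) = -P - (k:ℂ)^2 * Q := by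
    have := eq4
    rw [IBP2] at this
    linear_combination -this
  have hcplx : (∫ y in (-1:ℝ)..1, star (F y) * Ft y)
      = (ν:ℂ) * (-(A:ℂ)) - ((ν:ℂ)*(k:ℂ)^2) * (B:ℂ) - (Complex.I*(k:ℂ)) * (c:ℂ)
        + (-P - (k:ℂ)^2 * Q) := by
    rw [eq1, eq1b, IBP1, eq5, eq6, eq7, hG_eq]
  -- real part
  have hre_int : (∫ y in (-1:ℝ)..1, 2 * ((F y).re * (Ft y).re + (F y).im * (Ft y).im))
      = 2 * (∫ y in (-1:ℝ)..1, star (F y) * Ft y).re := by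
    have h0 : ∀ y, 2 * ((F y).re * (Ft y).re + (F y).im * (Ft y).im)
        = 2 * (Complex.reCLM (star (F y) * Ft y)) := by
      intro y
      simp [Complex.mul_re, Complex.star_def]
    rw [intervalIntegral.integral_congr (g := fun y => 2 * (Complex.reCLM (star (F y) * Ft y)))
      (fun y _ => h0 y), intervalIntegral.integral_const_mul,
      ContinuousLinearMap.intervalIntegral_comp_comm _ (ii (fun y => star (F y) * Ft y) (hsFc.mul hFt_cont))]
    rfl
  have hReEq : (∫ y in (-1:ℝ)..1, star (F y) * Ft y).re
      = -(ν*A) - ν*k^2*B - P.re - k^2*Q.re := by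
    have hk1 : ((k:ℂ)^2).re = k^2 := by
      rw [show ((k:ℂ)^2) = ((k^2:ℝ):ℂ) by push_cast; ring]; exact Complex.ofReal_re _
    have hk2 : ((k:ℂ)^2).im = 0 := by
      rw [show ((k:ℂ)^2) = ((k^2:ℝ):ℂ) by push_cast; ring]; exact Complex.ofReal_im _
    rw [hcplx]
    simp [Complex.mul_re, Complex.mul_im, Complex.ofReal_re, Complex.ofReal_im,
      Complex.I_re, Complex.I_im, hk1, hk2]
    ring
  -- bounds on P and Q
  have iiR : ∀ (h : ℝ → ℝ), ContinuousOn h (Icc (-1:ℝ) 1) → IntervalIntegrable h volume (-1) 1 := by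
    intro h hcont
    rw [← uI] at hcont
    exact hcont.intervalIntegrable
  have norm_bound : ∀ (u v : ℝ → ℂ), ContinuousOn u (Icc (-1:ℝ) 1) → ContinuousOn v (Icc (-1:ℝ) 1) →
      -(∫ y in (-1:ℝ)..1, star (u y) * v y).re
        ≤ ν/2 * (∫ y in (-1:ℝ)..1, ‖u y‖^2) + ν⁻¹/2 * (∫ y in (-1:ℝ)..1, ‖v y‖^2) := by
    intro u v hu hv
    have h1 : -(∫ y in (-1:ℝ)..1, star (u y) * v y).re ≤ ‖∫ y in (-1:ℝ)..1, star (u y) * v y‖ := by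
      have := abs_le.1 (le_refl |(∫ y in (-1:ℝ)..1, star (u y) * v y).re|)
      calc -(∫ y in (-1:ℝ)..1, star (u y) * v y).re ≤ |(∫ y in (-1:ℝ)..1, star (u y) * v y).re| :=
            neg_le_abs _
        _ ≤ ‖∫ y in (-1:ℝ)..1, star (u y) * v y‖ := Complex.abs_re_le_norm _
    have h2 : ‖∫ y in (-1:ℝ)..1, star (u y) * v y‖ ≤ ∫ y in (-1:ℝ)..1, ‖u y‖ * ‖v y‖ := by
      refine (intervalIntegral.norm_integral_le_integral_norm (by norm_num : (-1:ℝ) ≤ 1)).trans_eq ?_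
      apply intervalIntegral.integral_congr
      intro y _
      simp [norm_mul]
    have h3 : (∫ y in (-1:ℝ)..1, ‖u y‖ * ‖v y‖)
        ≤ ∫ y in (-1:ℝ)..1, (ν/2 * ‖u y‖^2 + ν⁻¹/2 * ‖v y‖^2) := by
      apply intervalIntegral.integral_mono_on (by norm_num : (-1:ℝ) ≤ 1)
      · exact iiR _ ((hu.norm).mul (hv.norm))
      · exact iiR _ ((continuousOn_const.mul ((hu.norm).pow 2)).add
          (continuousOn_const.mul ((hv.norm).pow 2)))
      · exact fun y _ => young_aux hν _ _
    have h4 : (∫ y in (-1:ℝ)..1, (ν/2 * ‖u y‖^2 + ν⁻¹/2 * ‖v y‖^2))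
        = ν/2 * (∫ y in (-1:ℝ)..1, ‖u y‖^2) + ν⁻¹/2 * (∫ y in (-1:ℝ)..1, ‖v y‖^2) := by
      rw [intervalIntegral.integral_add
          ((iiR (fun y => ‖u y‖^2) ((hu.norm).pow 2)).const_mul _)
          ((iiR (fun y => ‖v y‖^2) ((hv.norm).pow 2)).const_mul _),
        intervalIntegral.integral_const_mul, intervalIntegral.integral_const_mul]
    linarith
  have hPb : -P.re ≤ ν/2 * A + ν⁻¹/2 * C := norm_bound Fy Φy hFyc hΦyc
  have hQb : -Q.re ≤ ν/2 * B + ν⁻¹/2 * D := norm_bound F Φ hFc hΦc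
  have hQb2 : k^2 * (-Q.re) ≤ k^2 * (ν/2 * B + ν⁻¹/2 * D) :=
    mul_le_mul_of_nonneg_left hQb (sq_nonneg k)
  rw [hre_int, hReEq]
  nlinarith [hPb, hQb2]

/-- Mode-wise energy estimate for the forced drift–diffusion equation
`∂_t f − ν(∂²_y − k²)f + iky f = g` with Dirichlet boundary conditions, where
`φ = (∂²_y − k²)^{-1} g`. -/
theorem forced_energy_estimate
    (ν k : ℝ) (f ft fy fyy g φ φy φyy : ℝ → ℝ → ℂ)
    (hν : 0 < ν)
    (hf_cont : ContinuousOn (fun p : ℝ × ℝ => f p.1 p.2) (Ici 0 ×ˢ Icc (-1) 1))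
    (hft_cont : ContinuousOn (fun p : ℝ × ℝ => ft p.1 p.2) (Ici 0 ×ˢ Icc (-1) 1))
    (hfy_cont : ContinuousOn (fun p : ℝ × ℝ => fy p.1 p.2) (Ici 0 ×ˢ Icc (-1) 1))
    (hfyy_cont : ContinuousOn (fun p : ℝ × ℝ => fyy p.1 p.2) (Ici 0 ×ˢ Icc (-1) 1))
    (hg_cont : ContinuousOn (fun p : ℝ × ℝ => g p.1 p.2) (Ici 0 ×ˢ Icc (-1) 1))
    (hfd_t : ∀ t ∈ Ici (0 : ℝ), ∀ y ∈ Icc (-1 : ℝ) 1,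
      HasDerivAt (fun s => f s y) (ft t y) t)
    (hfd_y : ∀ t ∈ Ici (0 : ℝ), ∀ y ∈ Icc (-1 : ℝ) 1,
      HasDerivAt (fun z => f t z) (fy t y) y)
    (hfd_yy : ∀ t ∈ Ici (0 : ℝ), ∀ y ∈ Icc (-1 : ℝ) 1,
      HasDerivAt (fun z => fy t z) (fyy t y) y)
    (hbdry : ∀ t ∈ Ici (0 : ℝ), f t (-1) = 0 ∧ f t 1 = 0)
    (heq : ∀ t ∈ Ici (0 : ℝ), ∀ y ∈ Ioo (-1 : ℝ) 1,
      ft t y = (ν : ℂ) * (fyy t y - (k : ℂ) ^ 2 * f t y)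
        - Complex.I * (k : ℂ) * (y : ℂ) * f t y + g t y)
    (hφ_cont : ContinuousOn (fun p : ℝ × ℝ => φ p.1 p.2) (Ici 0 ×ˢ Icc (-1) 1))
    (hφy_cont : ContinuousOn (fun p : ℝ × ℝ => φy p.1 p.2) (Ici 0 ×ˢ Icc (-1) 1))
    (hφd_y : ∀ t ∈ Ici (0 : ℝ), ∀ y ∈ Icc (-1 : ℝ) 1,
      HasDerivAt (fun z => φ t z) (φy t y) y)
    (hφd_yy : ∀ t ∈ Ici (0 : ℝ), ∀ y ∈ Icc (-1 : ℝ) 1,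
      HasDerivAt (fun z => φy t z) (φyy t y) y)
    (hφbdry : ∀ t ∈ Ici (0 : ℝ), φ t (-1) = 0 ∧ φ t 1 = 0)
    (hφeq : ∀ t ∈ Ici (0 : ℝ), ∀ y ∈ Ioo (-1 : ℝ) 1,
      φyy t y - (k : ℂ) ^ 2 * φ t y = g t y) :
    ∀ t : ℝ, 0 ≤ t →
      L2sq (f t) + ν * ∫ s in (0 : ℝ)..t, (L2sq (fy s) + k ^ 2 * L2sq (f s))
        ≤ L2sq (f 0) + ν⁻¹ * ∫ s in (0 : ℝ)..t, (L2sq (φy s) + k ^ 2 * L2sq (φ s)) := by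
  intro t ht
  rcases eq_or_lt_of_le ht with h0 | hpos
  · rw [← h0]
    simp
  -- continuity of the various squared norms
  have hEc : ContinuousOn (fun s => L2sq (f s)) (Ici (0:ℝ)) := cont_L2 hf_cont
  have hEyc : ContinuousOn (fun s => L2sq (fy s)) (Ici (0:ℝ)) := cont_L2 hfy_cont
  have hPc : ContinuousOn (fun s => L2sq (φ s)) (Ici (0:ℝ)) := cont_L2 hφ_cont
  have hPyc : ContinuousOn (fun s => L2sq (φy s)) (Ici (0:ℝ)) := cont_L2 hφy_cont
  set GG : ℝ → ℝ := fun s => ν * (L2sq (fy s) + k ^ 2 * L2sq (f s))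
      - ν⁻¹ * (L2sq (φy s) + k ^ 2 * L2sq (φ s)) with hGG
  have hGGcont : ContinuousOn GG (Ici (0:ℝ)) :=
    (continuousOn_const.mul (hEyc.add (continuousOn_const.mul hEc))).sub
      (continuousOn_const.mul (hPyc.add (continuousOn_const.mul hPc)))
  have uI0t : uIcc (0:ℝ) t = Icc 0 t := uIcc_of_le ht
  have hIccsub : Icc (0:ℝ) t ⊆ Ici 0 := fun x hx => hx.1
  have hGGint : IntegrableOn GG (uIcc (0:ℝ) t) volume := by
    rw [uI0t]
    exact (hGGcont.mono hIccsub).integrableOn_Icc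
  set F : ℝ → ℝ := fun s => L2sq (f s) + ∫ σ in (0:ℝ)..s, GG σ with hF
  have hFcont : ContinuousOn F (Icc 0 t) := by
    apply ContinuousOn.add (hEc.mono hIccsub)
    have := intervalIntegral.continuousOn_primitive_interval (a := (0:ℝ)) (b := t) hGGint
    rw [uI0t] at this
    exact this
  -- the derivative of F on the interior
  have hFderiv : ∀ s ∈ Ioo (0:ℝ) t, ∃ d : ℝ, HasDerivAt F d s ∧ d ≤ 0 := by
    intro s hs
    have hs0 : (0:ℝ) ≤ s := hs.1.le
    have hE := hasDerivAt_L2sq hf_cont hft_cont hfd_t hs.1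
    have hprim : HasDerivAt (fun u => ∫ σ in (0:ℝ)..u, GG σ) (GG s) s := by
      apply intervalIntegral.integral_hasDerivAt_right
      · have : ContinuousOn GG (uIcc (0:ℝ) s) := by
          rw [uIcc_of_le hs0]
          exact hGGcont.mono (fun x hx => hx.1)
        exact this.intervalIntegrable
      · exact (hGGcont.mono (fun x (hx : x ∈ Ioi (0:ℝ)) => mem_Ici.2 (mem_Ioi.1 hx).le)).stronglyMeasurableAtFilter
          isOpen_Ioi s hs.1
      · exact (hGGcont.continuousAt (Ici_mem_nhds hs.1))
    refine ⟨_, hE.add hprim, ?_⟩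
    -- the energy inequality at time s
    have hineq := energy_ineq_at hν (f s) (ft s) (fy s) (fyy s) (g s) (φ s) (φy s) (φyy s)
      (hfd_y s hs0) (hfd_yy s hs0) (hφd_y s hs0) (hφd_yy s hs0)
      (cont_slice hft_cont hs0) (cont_slice hfyy_cont hs0) (cont_slice hg_cont hs0)
      (hbdry s hs0) (heq s hs0) (hφeq s hs0)
    have e1 : L2sq (fy s) = ∫ y in (-1:ℝ)..1, ‖fy s y‖ ^ 2 := rfl
    have e2 : L2sq (f s) = ∫ y in (-1:ℝ)..1, ‖f s y‖ ^ 2 := rfl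
    have e3 : L2sq (φy s) = ∫ y in (-1:ℝ)..1, ‖φy s y‖ ^ 2 := rfl
    have e4 : L2sq (φ s) = ∫ y in (-1:ℝ)..1, ‖φ s y‖ ^ 2 := rfl
    simp only [hGG]
    rw [e1, e2, e3, e4]
    linarith [hineq]
  -- F is antitone on [0, t]
  have hanti : AntitoneOn F (Icc 0 t) := by
    apply antitoneOn_of_deriv_nonpos (convex_Icc 0 t) hFcont
    · rw [interior_Icc]
      intro s hs
      obtain ⟨d, hd, _⟩ := hFderiv s hs
      exact hd.differentiableAt.differentiableWithinAt
    · rw [interior_Icc]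
      intro s hs
      obtain ⟨d, hd, hd0⟩ := hFderiv s hs
      rw [hd.deriv]
      exact hd0
  have hFle : F t ≤ F 0 :=
    hanti ⟨le_refl 0, ht⟩ ⟨ht, le_refl t⟩ ht
  have hF0 : F 0 = L2sq (f 0) := by
    simp [hF]
  -- split the integral of GG
  have i1 : IntervalIntegrable (fun s => L2sq (fy s) + k ^ 2 * L2sq (f s)) volume 0 t := by
    have : ContinuousOn (fun s => L2sq (fy s) + k ^ 2 * L2sq (f s)) (uIcc (0:ℝ) t) := by
      rw [uI0t]
      exact (hEyc.add (continuousOn_const.mul hEc)).mono hIccsub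
    exact this.intervalIntegrable
  have i2 : IntervalIntegrable (fun s => L2sq (φy s) + k ^ 2 * L2sq (φ s)) volume 0 t := by
    have : ContinuousOn (fun s => L2sq (φy s) + k ^ 2 * L2sq (φ s)) (uIcc (0:ℝ) t) := by
      rw [uI0t]
      exact (hPyc.add (continuousOn_const.mul hPc)).mono hIccsub
    exact this.intervalIntegrable
  have hsplit : (∫ σ in (0:ℝ)..t, GG σ)
      = ν * (∫ s in (0:ℝ)..t, (L2sq (fy s) + k ^ 2 * L2sq (f s)))
        - ν⁻¹ * (∫ s in (0:ℝ)..t, (L2sq (φy s) + k ^ 2 * L2sq (φ s))) := by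
    rw [← intervalIntegral.integral_const_mul, ← intervalIntegral.integral_const_mul,
      ← intervalIntegral.integral_sub (i1.const_mul ν) (i2.const_mul ν⁻¹)]
  have hFt : F t = L2sq (f t) + (∫ σ in (0:ℝ)..t, GG σ) := rfl
  rw [hFt, hF0, hsplit] at hFle
  linarith [hFle]
end
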